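/- arXiv:2304.00945 — 3 statements merged into one kernel-verified Lean document; each statement's English description precedes it below -/
import Mathlib

section
/- Crossing Lemma: Let G be a 3-connected graph other than K4, and let (A,B) and (C,D) be two nontrivial tri-separations of G that cross. Then exactly one of the following holds: (1) all four links have size one and the centre consists of a single vertex; (2) all four links are empty and the centre consists of three vertices. In particular, there are no jumping edges. Moreover, if G[A\B] or G[B\A] is connected (i.e. (A,B) is half-connected), then case (1) holds. -/
namespace Paper

open SimpleGraph

variable {V : Type*} [Fintype V] [DecidableEq V]

/-- A graph is `k`-connected if it has more than `k` vertices and deleting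
fewer than `k` vertices never disconnects it. -/
def KConnected {W : Type*} (k : ℕ) (H : SimpleGraph W) : Prop :=
  k < Nat.card W ∧ ∀ S : Set W, S.ncard < k → (H.induce Sᶜ).Connected

/-- A mixed-separation of `G`: `A ∪ B = V(G)` and both `A \ B` and `B \ A` are nonempty. -/
def MixedSep (G : SimpleGraph V) (A B : Set V) : Prop :=
  A ∪ B = Set.univ ∧ (A \ B).Nonempty ∧ (B \ A).Nonempty

/-- The edges of the separator of `(A,B)`: the edges between `A \ B` and `B \ A`. -/
def sepEdges (G : SimpleGraph V) (A B : Set V) : Set (Sym2 V) :=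
  {e | e ∈ G.edgeSet ∧ ∃ x ∈ A \ B, ∃ y ∈ B \ A, e = s(x, y)}

/-- The separator of `(A,B)`: the vertices of `A ∩ B` together with the
edges between `A \ B` and `B \ A`, viewed as a set in `V ⊕ Sym2 V`. -/
def sepSet (G : SimpleGraph V) (A B : Set V) : Set (V ⊕ Sym2 V) :=
  (Sum.inl '' (A ∩ B)) ∪ (Sum.inr '' sepEdges G A B)

/-- The order of a mixed-separation: the size of its separator. -/
noncomputable def sepOrder (G : SimpleGraph V) (A B : Set V) : ℕ :=
  (sepSet G A B).ncard

/-- A mixed `k`-separation. -/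
def MixedKSep (G : SimpleGraph V) (k : ℕ) (A B : Set V) : Prop :=
  MixedSep G A B ∧ sepOrder G A B = k

/-- A tri-separation: a mixed 3-separation such that every vertex of `A ∩ B`
has at least two neighbours in both `G[A]` and `G[B]`. -/
def TriSep (G : SimpleGraph V) (A B : Set V) : Prop :=
  MixedKSep G 3 A B ∧
    ∀ v ∈ A ∩ B, 2 ≤ (G.neighborSet v ∩ A).ncard ∧ 2 ≤ (G.neighborSet v ∩ B).ncard

/-- Two mixed-separations are nested if, after possibly swapping the names of
the sides of either one, `A ⊆ C` and `B ⊇ D`. -/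
def Nested (A B C D : Set V) : Prop :=
  (A ⊆ C ∧ D ⊆ B) ∨ (A ⊆ D ∧ C ⊆ B) ∨ (B ⊆ C ∧ D ⊆ A) ∨ (B ⊆ D ∧ C ⊆ A)

/-- The induced subgraph `G[A]` contains a cycle. -/
def HasCycleIn (G : SimpleGraph V) (A : Set V) : Prop :=
  ∃ (u : V) (p : G.Walk u u), p.IsCycle ∧ ∀ x ∈ p.support, x ∈ A

/-- A mixed 3-separation is nontrivial if both sides induce a subgraph containing a cycle. -/
def NontrivialSep (G : SimpleGraph V) (A B : Set V) : Prop :=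
  HasCycleIn G A ∧ HasCycleIn G B

/-- A mixed-separation is strong if every vertex in its separator has degree at least 4. -/
def StrongSep (G : SimpleGraph V) (A B : Set V) : Prop :=
  ∀ v ∈ A ∩ B, 4 ≤ (G.neighborSet v).ncard

/-- A tri-separation is totally nested if it is nested with every tri-separation of `G`. -/
def TotallyNested (G : SimpleGraph V) (A B : Set V) : Prop :=
  ∀ C D : Set V, TriSep G C D → Nested A B C D

/-- A trivial tri-separation: its sides are the sides `{v}` and `V \ {v}` of an
atomic cut at a degree-3 vertex `v`. -/
def TrivialSep (G : SimpleGraph V) (A B : Set V) : Prop :=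
  ∃ v : V, (G.neighborSet v).ncard = 3 ∧
    ((A = {v} ∧ B = {v}ᶜ) ∨ (B = {v} ∧ A = {v}ᶜ))

/-- Diagonal edges of the crossing-diagram of `(A,B)` and `(C,D)`:
edges whose endvertices lie in opposite corners. -/
def diagEdges (G : SimpleGraph V) (A B C D : Set V) : Set (Sym2 V) :=
  {e | e ∈ G.edgeSet ∧ ∃ x y, e = s(x, y) ∧
    ((x ∈ (A \ B) ∩ (C \ D) ∧ y ∈ (B \ A) ∩ (D \ C)) ∨
     (x ∈ (A \ B) ∩ (D \ C) ∧ y ∈ (B \ A) ∩ (C \ D)))}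

/-- The centre of the crossing-diagram: `A ∩ B ∩ C ∩ D` together with the diagonal edges. -/
def centre (G : SimpleGraph V) (A B C D : Set V) : Set (V ⊕ Sym2 V) :=
  (Sum.inl '' (A ∩ B ∩ C ∩ D)) ∪ (Sum.inr '' diagEdges G A B C D)

/-- The link for the side `C` in the crossing-diagram of `(A,B)` and `(C,D)`:
the vertices `(A ∩ B) \ D` together with the non-diagonal edges of the separator
of `(A,B)` having an endvertex in a corner for `C`. -/
def link (G : SimpleGraph V) (A B C D : Set V) : Set (V ⊕ Sym2 V) :=
  (Sum.inl '' ((A ∩ B) \ D)) ∪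
    (Sum.inr '' {e | e ∈ sepEdges G A B ∧ e ∉ diagEdges G A B C D ∧ ∃ x ∈ e, x ∈ C \ D})

/-- The corner-separator at the corner for `{A,C}`: the union of the links for `A`
and for `C` together with the centre, minus the diagonal edges without an
endvertex in the corner for `{A,C}`. -/
def cornerSep (G : SimpleGraph V) (A B C D : Set V) : Set (V ⊕ Sym2 V) :=
  link G C D A B ∪ link G A B C D ∪ (Sum.inl '' (A ∩ B ∩ C ∩ D)) ∪
    (Sum.inr '' {e | e ∈ diagEdges G A B C D ∧ ∃ x ∈ e, x ∈ (A \ B) ∩ (C \ D)})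

/-- Jumping edges: edges joining vertices of two opposite links. -/
def jumpEdges (G : SimpleGraph V) (A B C D : Set V) : Set (Sym2 V) :=
  {e | e ∈ G.edgeSet ∧ ∃ x y, e = s(x, y) ∧
    ((x ∈ (A ∩ B) \ D ∧ y ∈ (A ∩ B) \ C) ∨ (x ∈ (C ∩ D) \ B ∧ y ∈ (C ∩ D) \ A))}

/-- A 2-separation: a separation of order two with no edges in its separator. -/
def TwoSep (G : SimpleGraph V) (A B : Set V) : Prop :=
  A ∪ B = Set.univ ∧ (A \ B).Nonempty ∧ (B \ A).Nonempty ∧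
    (A ∩ B).ncard = 2 ∧ sepEdges G A B = ∅

/-- `K` is (the vertex set of) a connected component of `G - S`. -/
def IsCompOf (G : SimpleGraph V) (S K : Set V) : Prop :=
  ∃ c : (G.induce Sᶜ).ConnectedComponent, K = Subtype.val '' c.supp

/-! ### Auxiliary infrastructure -/

section Infra
set_option linter.unusedSectionVars false
set_option linter.unusedVariables false

variable {G : SimpleGraph V} {A B C D R S T : Set V} {u v x y : V}

lemma mem_or_of_union (h : A ∪ B = Set.univ) (v : V) : v ∈ A ∨ v ∈ B := by
  have : v ∈ A ∪ B := by rw [h]; trivial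
  exact this

lemma sepEdges_comm (G : SimpleGraph V) (A B : Set V) :
    sepEdges G A B = sepEdges G B A := by
  ext e
  constructor <;>
  · rintro ⟨he, x, hx, y, hy, rfl⟩
    exact ⟨he, y, hy, x, hx, Sym2.eq_swap⟩

lemma mem_sepEdges_of (h : G.Adj x y) (hx : x ∈ A \ B) (hy : y ∈ B \ A) :
    s(x, y) ∈ sepEdges G A B :=
  ⟨h, x, hx, y, hy, rfl⟩

lemma adj_of_mem_sepEdges (h : s(x, y) ∈ sepEdges G A B) : G.Adj x y := h.1

lemma notMem_diag (hx : x ∈ A \ B) (hy : y ∈ B \ A)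
    (h1 : ¬(x ∈ C \ D ∧ y ∈ D \ C)) (h2 : ¬(x ∈ D \ C ∧ y ∈ C \ D)) :
    s(x, y) ∉ diagEdges G A B C D := by
  rintro ⟨-, a, b, hab, hcase⟩
  rcases Sym2.eq_iff.mp hab.symm with ⟨rfl, rfl⟩ | ⟨rfl, rfl⟩
  · rcases hcase with ⟨ha, hb⟩ | ⟨ha, hb⟩
    · exact h1 ⟨ha.2, hb.2⟩
    · exact h2 ⟨ha.2, hb.2⟩
  · rcases hcase with ⟨ha, hb⟩ | ⟨ha, hb⟩
    · exact hy.2 ha.1.1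
    · exact hy.2 ha.1.1

lemma diag_elim (h : e ∈ diagEdges G A B C D) :
    ∃ x y, e = s(x, y) ∧ G.Adj x y ∧
      ((x ∈ (A \ B) ∩ (C \ D) ∧ y ∈ (B \ A) ∩ (D \ C)) ∨
       (x ∈ (A \ B) ∩ (D \ C) ∧ y ∈ (B \ A) ∩ (C \ D))) := by
  obtain ⟨he, x, y, rfl, hc⟩ := h
  exact ⟨x, y, rfl, he, hc⟩

lemma diag_symm₁ (G : SimpleGraph V) (A B C D : Set V) :
    diagEdges G C D A B = diagEdges G A B C D := by
  ext e
  constructor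
  · rintro ⟨he, x, y, rfl, ⟨hx, hy⟩ | ⟨hx, hy⟩⟩
    · exact ⟨he, x, y, rfl, Or.inl ⟨⟨hx.2, hx.1⟩, ⟨hy.2, hy.1⟩⟩⟩
    · exact ⟨he, y, x, Sym2.eq_swap.symm, Or.inr ⟨⟨hy.2, hy.1⟩, ⟨hx.2, hx.1⟩⟩⟩
  · rintro ⟨he, x, y, rfl, ⟨hx, hy⟩ | ⟨hx, hy⟩⟩
    · exact ⟨he, x, y, rfl, Or.inl ⟨⟨hx.2, hx.1⟩, ⟨hy.2, hy.1⟩⟩⟩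
    · exact ⟨he, y, x, Sym2.eq_swap.symm, Or.inr ⟨⟨hy.2, hy.1⟩, ⟨hx.2, hx.1⟩⟩⟩

lemma diag_symm₂ (G : SimpleGraph V) (A B C D : Set V) :
    diagEdges G A B D C = diagEdges G A B C D := by
  ext e
  constructor <;>
  · rintro ⟨he, x, y, rfl, ⟨hx, hy⟩ | ⟨hx, hy⟩⟩
    · exact ⟨he, x, y, rfl, Or.inr ⟨hx, hy⟩⟩
    · exact ⟨he, x, y, rfl, Or.inl ⟨hx, hy⟩⟩

lemma diag_symm₃ (G : SimpleGraph V) (A B C D : Set V) :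
    diagEdges G B A C D = diagEdges G A B C D := by
  ext e
  constructor <;>
  · rintro ⟨he, x, y, rfl, ⟨hx, hy⟩ | ⟨hx, hy⟩⟩
    · exact ⟨he, y, x, Sym2.eq_swap.symm, Or.inr ⟨hy, hx⟩⟩
    · exact ⟨he, y, x, Sym2.eq_swap.symm, Or.inl ⟨hy, hx⟩⟩

end Infra

section Infra2
set_option linter.unusedSectionVars false
set_option linter.unusedVariables false

variable {G : SimpleGraph V} {A B C D R T : Set V} {u v x y : V} {e : Sym2 V}

lemma ncard_inl_union_inr (S : Set V) (F : Set (Sym2 V)) :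
    ((Sum.inl '' S) ∪ (Sum.inr '' F) : Set (V ⊕ Sym2 V)).ncard = S.ncard + F.ncard := by
  rw [Set.ncard_union_eq, Set.ncard_image_of_injective _ Sum.inl_injective,
    Set.ncard_image_of_injective _ Sum.inr_injective]
  rw [Set.disjoint_left]
  rintro _ ⟨a, -, rfl⟩ ⟨b, -, h⟩
  exact Sum.inl_ne_inr h.symm

lemma sepOrder_eq_add (G : SimpleGraph V) (A B : Set V) :
    sepOrder G A B = (A ∩ B).ncard + (sepEdges G A B).ncard :=
  ncard_inl_union_inr _ _

/-- Catalogue of the nine pieces of the crossing diagram. -/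
lemma piece_cases (hU1 : A ∪ B = Set.univ) (hU2 : C ∪ D = Set.univ) (v : V) :
    v ∈ (A \ B) ∩ (C \ D) ∨ v ∈ (A \ B) ∩ (D \ C) ∨ v ∈ (C ∩ D) \ B ∨
    v ∈ (B \ A) ∩ (C \ D) ∨ v ∈ (B \ A) ∩ (D \ C) ∨ v ∈ (C ∩ D) \ A ∨
    v ∈ (A ∩ B) \ D ∨ v ∈ (A ∩ B) \ C ∨ v ∈ A ∩ B ∩ C ∩ D := by
  have h1 : v ∈ A \ B ∨ v ∈ B \ A ∨ v ∈ A ∩ B := by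
    rcases mem_or_of_union hU1 v with h | h
    · by_cases hb : v ∈ B
      · exact Or.inr (Or.inr ⟨h, hb⟩)
      · exact Or.inl ⟨h, hb⟩
    · by_cases ha : v ∈ A
      · exact Or.inr (Or.inr ⟨ha, h⟩)
      · exact Or.inr (Or.inl ⟨h, ha⟩)
  have h2 : v ∈ C \ D ∨ v ∈ D \ C ∨ v ∈ C ∩ D := by
    rcases mem_or_of_union hU2 v with h | h
    · by_cases hb : v ∈ D
      · exact Or.inr (Or.inr ⟨h, hb⟩)
      · exact Or.inl ⟨h, hb⟩
    · by_cases ha : v ∈ C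
      · exact Or.inr (Or.inr ⟨ha, h⟩)
      · exact Or.inr (Or.inl ⟨h, ha⟩)
  rcases h1 with h1 | h1 | h1 <;> rcases h2 with h2 | h2 | h2
  · exact Or.inl ⟨h1, h2⟩
  · exact Or.inr (Or.inl ⟨h1, h2⟩)
  · exact Or.inr (Or.inr (Or.inl ⟨h2, h1.2⟩))
  · exact Or.inr (Or.inr (Or.inr (Or.inl ⟨h1, h2⟩)))
  · exact Or.inr (Or.inr (Or.inr (Or.inr (Or.inl ⟨h1, h2⟩))))
  · exact Or.inr (Or.inr (Or.inr (Or.inr (Or.inr (Or.inl ⟨h2, h1.2⟩)))))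
  · exact Or.inr (Or.inr (Or.inr (Or.inr (Or.inr (Or.inr (Or.inl ⟨h1, h2.2⟩))))))
  · exact Or.inr (Or.inr (Or.inr (Or.inr (Or.inr (Or.inr (Or.inr (Or.inl ⟨h1, h2.2⟩)))))))
  · exact Or.inr (Or.inr (Or.inr (Or.inr (Or.inr (Or.inr (Or.inr (Or.inr ⟨⟨h1, h2.1⟩, h2.2⟩)))))))

/-- From a walk in an induced subgraph from inside `R` to outside `R`,
extract an adjacent pair crossing the boundary of `R`. -/
lemma walk_cross {S R : Set V} : ∀ {a b : ↥S} (p : (G.induce S).Walk a b),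
    (a : V) ∈ R → (b : V) ∉ R →
    ∃ x y : V, x ∈ S ∧ y ∈ S ∧ x ∈ R ∧ y ∉ R ∧ G.Adj x y := by
  intro a b p
  induction p with
  | nil => intro h1 h2; exact absurd h1 h2
  | @cons a c b hadj p ih =>
    intro h1 h2
    by_cases hc : (c : V) ∈ R
    · exact ih hc h2
    · exact ⟨a, c, a.2, c.2, h1, hc, hadj⟩

/-- The fundamental cut lemma: in a 3-connected graph there is no vertex set `T`
of size at most two such that there are vertices inside `R` and outside `R`
avoiding `T`, with no edge crossing from `R \ T` to `Rᶜ \ T`. -/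
lemma cut_lemma (h3 : KConnected 3 G) {R T : Set V} (hT : T.ncard ≤ 2)
    (hsep : ∀ x ∈ R, x ∉ T → ∀ y, y ∉ R → y ∉ T → ¬ G.Adj x y)
    (h1 : ∃ x, x ∈ R ∧ x ∉ T) (h2 : ∃ y, y ∉ R ∧ y ∉ T) : False := by
  obtain ⟨u, huR, huT⟩ := h1
  obtain ⟨v, hvR, hvT⟩ := h2
  have hconn := h3.2 T (lt_of_le_of_lt hT (by norm_num))
  obtain ⟨w⟩ := hconn.preconnected ⟨u, huT⟩ ⟨v, hvT⟩
  obtain ⟨x, y, hxS, hyS, hxR, hyR, hadj⟩ := walk_cross w huR hvR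
  exact hsep x hxR hxS y hyR hyS hadj

lemma kconn_card (h3 : KConnected 3 G) : 3 < Nat.card V := h3.1

lemma kconn_adj (h3 : KConnected 3 G) (hcard : Nat.card V ≤ 4) (huv : u ≠ v) :
    G.Adj u v := by
  have hconn := h3.2 ({u, v}ᶜ) ?_
  · rw [compl_compl] at hconn
    have hu : u ∈ ({u, v} : Set V) := by simp
    have hv : v ∈ ({u, v} : Set V) := by simp
    obtain ⟨w⟩ := hconn.preconnected ⟨u, hu⟩ ⟨v, hv⟩
    obtain ⟨x, y, hxS, hyS, hxR, hyR, hadj⟩ :=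
      walk_cross (R := {u}) w rfl (by simp [Set.mem_singleton_iff]; exact fun h => (huv h.symm).elim)
    have hxu : x = u := hxR
    have hyv : y = v := by
      rcases hyS with h | h
      · exact absurd h hyR
      · exact h
    rwa [hxu, hyv] at hadj
  · have : ({u, v} : Set V).ncard + ({u, v}ᶜ : Set V).ncard = Nat.card V := by
      rw [← Set.ncard_add_ncard_compl]
    have h2 : ({u, v} : Set V).ncard = 2 := Set.ncard_pair huv
    omega

lemma kconn_K4 (h3 : KConnected 3 G) (hcard : Nat.card V = 4) :
    Nonempty (G ≃g completeGraph (Fin 4)) := by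
  have hc : Fintype.card V = 4 := by rw [← Nat.card_eq_fintype_card, hcard]
  refine ⟨⟨Fintype.equivFinOfCardEq hc, ?_⟩⟩
  intro a b
  simp only [completeGraph, top_adj]
  constructor
  · intro h
    exact kconn_adj h3 hcard.le fun hab => h (by rw [hab])
  · intro h hab
    exact G.ne_of_adj h ((Fintype.equivFinOfCardEq hc).injective hab)

lemma three_le_of_hasCycleIn (h : HasCycleIn G A) : 3 ≤ A.ncard := by
  obtain ⟨u, p, hc, hsup⟩ := h
  have hlen := hc.three_le_length
  have hnd : p.support.tail.Nodup := hc.2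
  have hlen2 : p.support.tail.length = p.length := by
    have := p.length_support
    simp [List.length_tail, this]
  have hsub : ↑p.support.tail.toFinset ⊆ A := by
    intro x hx
    simp only [Finset.coe_sort_coe, List.coe_toFinset, List.mem_toFinset] at hx
    exact hsup x (List.mem_of_mem_tail hx)
  calc 3 ≤ p.support.tail.toFinset.card := by
            rw [List.toFinset_card_of_nodup hnd, hlen2]; exact hlen
    _ = (↑p.support.tail.toFinset : Set V).ncard := (Set.ncard_coe_finset _).symm
    _ ≤ A.ncard := Set.ncard_le_ncard hsub

end Infra2

section Infra3
set_option linter.unusedSectionVars false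
set_option linter.unusedVariables false

variable {G : SimpleGraph V} {A B C D R T : Set V} {u v x y : V} {e : Sym2 V}

/-- The edge-part of a link. -/
def linkE (G : SimpleGraph V) (A B C D : Set V) : Set (Sym2 V) :=
  {e | e ∈ sepEdges G A B ∧ e ∉ diagEdges G A B C D ∧ ∃ x ∈ e, x ∈ C \ D}

lemma link_eq (G : SimpleGraph V) (A B C D : Set V) :
    link G A B C D = (Sum.inl '' ((A ∩ B) \ D)) ∪ (Sum.inr '' linkE G A B C D) := rfl

lemma ncard_link (G : SimpleGraph V) (A B C D : Set V) :
    (link G A B C D).ncard = ((A ∩ B) \ D).ncard + (linkE G A B C D).ncard :=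
  ncard_inl_union_inr _ _

lemma linkE_symm₁ (G : SimpleGraph V) (A B C D : Set V) :
    linkE G B A C D = linkE G A B C D := by
  unfold linkE
  rw [sepEdges_comm G B A, diag_symm₃]

lemma link_symm₁ (G : SimpleGraph V) (A B C D : Set V) :
    link G B A C D = link G A B C D := by
  unfold link
  rw [Set.inter_comm B A]
  have : {e | e ∈ sepEdges G B A ∧ e ∉ diagEdges G B A C D ∧ ∃ x ∈ e, x ∈ C \ D}
      = {e | e ∈ sepEdges G A B ∧ e ∉ diagEdges G A B C D ∧ ∃ x ∈ e, x ∈ C \ D} := by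
    rw [sepEdges_comm G B A, diag_symm₃]
  rw [this]

lemma sepOrder_symm (G : SimpleGraph V) (A B : Set V) :
    sepOrder G B A = sepOrder G A B := by
  unfold sepOrder sepSet
  rw [Set.inter_comm B A, sepEdges_comm G B A]

lemma triSep_symm (h : TriSep G A B) : TriSep G B A := by
  obtain ⟨⟨⟨hu, h1, h2⟩, ho⟩, hd⟩ := h
  refine ⟨⟨⟨by rw [Set.union_comm]; exact hu, h2, h1⟩, by rw [sepOrder_symm]; exact ho⟩, ?_⟩
  intro v hv
  rw [Set.inter_comm] at hv
  exact ⟨(hd v hv).2, (hd v hv).1⟩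

lemma nontrivialSep_symm (h : NontrivialSep G A B) : NontrivialSep G B A := ⟨h.2, h.1⟩

lemma nested_symm₁ : Nested B A C D ↔ Nested (V := V) A B C D := by
  unfold Nested; tauto

lemma nested_symm₂ : Nested A B D C ↔ Nested (V := V) A B C D := by
  unfold Nested; tauto

lemma nested_symm₃ : Nested C D A B ↔ Nested (V := V) A B C D := by
  unfold Nested; tauto

lemma diag_subset_sepEdges (G : SimpleGraph V) (A B C D : Set V) :
    diagEdges G A B C D ⊆ sepEdges G A B := by
  rintro e ⟨he, x, y, rfl, ⟨hx, hy⟩ | ⟨hx, hy⟩⟩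
  · exact ⟨he, x, hx.1, y, hy.1, rfl⟩
  · exact ⟨he, x, hx.1, y, hy.1, rfl⟩

lemma linkE_subset_sepEdges (G : SimpleGraph V) (A B C D : Set V) :
    linkE G A B C D ⊆ sepEdges G A B := fun _ h => h.1

/-- The two links of a separation have disjoint edge parts. -/
lemma linkE_disjoint (G : SimpleGraph V) (A B C D : Set V) :
    Disjoint (linkE G A B C D) (linkE G A B D C) := by
  rw [Set.disjoint_left]
  rintro e h1 h2
  obtain ⟨he, hd, a, ha, haC⟩ := h1
  obtain ⟨-, hd', b, hb, hbD⟩ := h2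
  obtain ⟨hedge, x, hx, y, hy, rfl⟩ := he
  apply hd
  have hab : a ≠ b := fun h => haC.2 (h ▸ hbD).1
  rcases Sym2.mem_iff.mp ha with rfl | rfl
  · rcases Sym2.mem_iff.mp hb with rfl | rfl
    · exact absurd rfl hab
    · exact ⟨hedge, a, b, rfl, Or.inl ⟨⟨hx, haC⟩, ⟨hy, hbD⟩⟩⟩
  · rcases Sym2.mem_iff.mp hb with rfl | rfl
    · exact ⟨hedge, b, a, rfl, Or.inr ⟨⟨hx, hbD⟩, ⟨hy, haC⟩⟩⟩
    · exact absurd rfl hab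

lemma linkE_disjoint_diag (G : SimpleGraph V) (A B C D : Set V) :
    Disjoint (linkE G A B C D) (diagEdges G A B C D) := by
  rw [Set.disjoint_left]
  rintro e ⟨he, hd, -⟩ h
  exact hd h

/-- Partition of `A ∩ B` into the two link vertex-sets and the centre. -/
lemma ncard_inter_split (hU2 : C ∪ D = Set.univ) (A B : Set V) :
    (A ∩ B).ncard
      = ((A ∩ B) \ D).ncard + ((A ∩ B) \ C).ncard + (A ∩ B ∩ C ∩ D).ncard := by
  have hset : A ∩ B = ((A ∩ B) \ D) ∪ ((A ∩ B) \ C) ∪ (A ∩ B ∩ C ∩ D) := by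
    ext v
    constructor
    · intro hv
      by_cases hc : v ∈ C
      · by_cases hd : v ∈ D
        · exact Or.inr ⟨⟨hv, hc⟩, hd⟩
        · exact Or.inl (Or.inl ⟨hv, hd⟩)
      · exact Or.inl (Or.inr ⟨hv, hc⟩)
    · rintro ((h | h) | h)
      · exact h.1
      · exact h.1
      · exact h.1.1
  have hd1 : Disjoint ((A ∩ B) \ D) ((A ∩ B) \ C) := by
    rw [Set.disjoint_left]
    rintro v ⟨-, hv⟩ ⟨-, hv'⟩
    rcases mem_or_of_union hU2 v with h | h
    · exact hv' h
    · exact hv h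
  have hd2 : Disjoint ((A ∩ B) \ D ∪ (A ∩ B) \ C) (A ∩ B ∩ C ∩ D) := by
    rw [Set.disjoint_left]
    rintro v (⟨-, hv⟩ | ⟨-, hv⟩) ⟨⟨-, hc⟩, hd⟩
    · exact hv hd
    · exact hv hc
  calc (A ∩ B).ncard = ((A ∩ B) \ D ∪ (A ∩ B) \ C ∪ A ∩ B ∩ C ∩ D).ncard := by
        rw [← hset]
    _ = _ := by rw [Set.ncard_union_eq hd2, Set.ncard_union_eq hd1]

/-- The budget: the separator of a tri-separation decomposes into the two links,
the centre vertices and the diagonal edges, all of total size at most 3. -/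
lemma budget (hU2 : C ∪ D = Set.univ) (horder : sepOrder G A B = 3) :
    ((A ∩ B) \ D).ncard + ((A ∩ B) \ C).ncard + (A ∩ B ∩ C ∩ D).ncard
      + (linkE G A B C D).ncard + (linkE G A B D C).ncard
      + (diagEdges G A B C D).ncard ≤ 3 := by
  have hsub : linkE G A B C D ∪ linkE G A B D C ∪ diagEdges G A B C D
      ⊆ sepEdges G A B := by
    rintro e ((h | h) | h)
    · exact h.1
    · exact h.1
    · exact diag_subset_sepEdges G A B C D h
  have hcard : (linkE G A B C D ∪ linkE G A B D C ∪ diagEdges G A B C D).ncard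
      = (linkE G A B C D).ncard + (linkE G A B D C).ncard
        + (diagEdges G A B C D).ncard := by
    rw [Set.ncard_union_eq, Set.ncard_union_eq (linkE_disjoint G A B C D)]
    rw [Set.disjoint_left]
    rintro e (h | h) h'
    · exact h.2.1 h'
    · rw [← diag_symm₂ G A B C D] at h'
      exact h.2.1 h'
  have hle : (linkE G A B C D).ncard + (linkE G A B D C).ncard
      + (diagEdges G A B C D).ncard ≤ (sepEdges G A B).ncard := by
    rw [← hcard]; exact Set.ncard_le_ncard hsub (Set.toFinite _)
  have h1 := sepOrder_eq_add G A B
  have h2 := ncard_inter_split hU2 A B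
  omega

/-- Generic bound: a set of vertices each incident with an edge of `F`, such that
each edge of `F` contains at most one vertex of the set, is at most as large as `F`. -/
lemma ncard_le_of_unique_edge {S : Set V} {F : Set (Sym2 V)}
    (hmem : ∀ v ∈ S, ∃ e ∈ F, v ∈ e)
    (huniq : ∀ e ∈ F, ∀ v ∈ S, v ∈ e → ∀ w ∈ S, w ∈ e → v = w) :
    S.ncard ≤ F.ncard := by
  have hch : ∀ v : V, ∃ e : Sym2 V, v ∈ S → e ∈ F ∧ v ∈ e := by
    intro v
    by_cases h : v ∈ S
    · obtain ⟨e, he, hv⟩ := hmem v h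
      exact ⟨e, fun _ => ⟨he, hv⟩⟩
    · exact ⟨s(v, v), fun h' => absurd h' h⟩
  choose f hf using hch
  exact Set.ncard_le_ncard_of_injOn f (fun v hv => (hf v hv).1)
    (fun v hv w hw hvw =>
      huniq (f v) (hf v hv).1 v hv (hf v hv).2 w hw (hvw ▸ (hf w hw).2))
    (Set.toFinite _)

lemma cornerSep_ncard_le (G : SimpleGraph V) (A B C D : Set V) :
    (cornerSep G A B C D).ncard ≤ (link G C D A B).ncard + (link G A B C D).ncard
      + (A ∩ B ∩ C ∩ D).ncard
      + ({e ∈ diagEdges G A B C D | ∃ x ∈ e, x ∈ (A \ B) ∩ (C \ D)}).ncard := by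
  unfold cornerSep
  calc _ ≤ (link G C D A B ∪ link G A B C D ∪ Sum.inl '' (A ∩ B ∩ C ∩ D) : Set _).ncard
        + (Sum.inr '' {e ∈ diagEdges G A B C D | ∃ x ∈ e, x ∈ (A \ B) ∩ (C \ D)} : Set (V ⊕ Sym2 V)).ncard :=
      Set.ncard_union_le _ _
    _ ≤ _ := by
      have h1 := Set.ncard_union_le (link G C D A B ∪ link G A B C D)
        (Sum.inl '' (A ∩ B ∩ C ∩ D) : Set (V ⊕ Sym2 V))
      have h2 := Set.ncard_union_le (link G C D A B) (link G A B C D)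
      have h3 := Set.ncard_image_of_injective (A ∩ B ∩ C ∩ D) (Sum.inl_injective (β := Sym2 V))
      have h4 := Set.ncard_image_of_injective
        {e ∈ diagEdges G A B C D | ∃ x ∈ e, x ∈ (A \ B) ∩ (C \ D)}
        (Sum.inr_injective (α := V))
      omega

end Infra3

section Infra4
set_option linter.unusedSectionVars false
set_option linter.unusedVariables false

variable {G : SimpleGraph V} {A B C D R T : Set V} {u v x y : V} {e : Sym2 V}

/-- The diagonal edges incident with the corner `(A \ B) ∩ (C \ D)`. -/
def Dga (G : SimpleGraph V) (A B C D : Set V) : Set (Sym2 V) :=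
  {e ∈ diagEdges G A B C D | ∃ x ∈ e, x ∈ (A \ B) ∩ (C \ D)}

lemma diag_eq_Dga_union (G : SimpleGraph V) (A B C D : Set V) :
    diagEdges G A B C D = Dga G A B C D ∪ Dga G A B D C := by
  have hsymm := diag_symm₂ G A B C D
  ext e
  constructor
  · intro he
    obtain ⟨x, y, rfl, hadj, ⟨hx, hy⟩ | ⟨hx, hy⟩⟩ := diag_elim he
    · exact Or.inl ⟨he, x, Sym2.mem_mk_left x y, hx⟩
    · exact Or.inr ⟨hsymm.symm ▸ he, x, Sym2.mem_mk_left x y, hx⟩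
  · rintro (⟨he, -⟩ | ⟨he, -⟩)
    · exact he
    · exact hsymm ▸ he

lemma Dga_disjoint (G : SimpleGraph V) (A B C D : Set V) :
    Disjoint (Dga G A B C D) (Dga G A B D C) := by
  rw [Set.disjoint_left]
  rintro e ⟨he, a, ha, haI⟩ ⟨he', b, hb, hbI⟩
  rw [diag_symm₂] at he'
  obtain ⟨x, y, rfl, hadj, ⟨hx, hy⟩ | ⟨hx, hy⟩⟩ := diag_elim he
  · rcases Sym2.mem_iff.mp hb with rfl | rfl
    · exact hx.2.2 hbI.2.1
    · exact hy.1.2 hbI.1.1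
  · rcases Sym2.mem_iff.mp ha with rfl | rfl
    · exact hx.2.2 haI.2.1
    · exact hy.1.2 haI.1.1

lemma Dga_opp (G : SimpleGraph V) (A B C D : Set V) :
    {e ∈ diagEdges G A B C D | ∃ x ∈ e, x ∈ (B \ A) ∩ (D \ C)} = Dga G A B C D := by
  ext e
  constructor
  · rintro ⟨he, a, ha, haI⟩
    obtain ⟨x, y, rfl, hadj, ⟨hx, hy⟩ | ⟨hx, hy⟩⟩ := diag_elim he
    · exact ⟨he, x, Sym2.mem_mk_left x y, hx⟩
    · rcases Sym2.mem_iff.mp ha with rfl | rfl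
      · exact absurd haI.1.1 hx.1.2
      · exact absurd hy.2.1 haI.2.2
  · rintro ⟨he, a, ha, haI⟩
    obtain ⟨x, y, rfl, hadj, ⟨hx, hy⟩ | ⟨hx, hy⟩⟩ := diag_elim he
    · exact ⟨he, y, Sym2.mem_mk_right x y, hy⟩
    · rcases Sym2.mem_iff.mp ha with rfl | rfl
      · exact absurd haI.2.1 hx.2.2
      · exact absurd haI.1.1 hy.1.2

lemma Dgb_opp (G : SimpleGraph V) (A B C D : Set V) :
    {e ∈ diagEdges G A B C D | ∃ x ∈ e, x ∈ (B \ A) ∩ (C \ D)}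
      = {e ∈ diagEdges G A B C D | ∃ x ∈ e, x ∈ (A \ B) ∩ (D \ C)} := by
  ext e
  constructor
  · rintro ⟨he, a, ha, haI⟩
    obtain ⟨x, y, rfl, hadj, ⟨hx, hy⟩ | ⟨hx, hy⟩⟩ := diag_elim he
    · rcases Sym2.mem_iff.mp ha with rfl | rfl
      · exact absurd haI.1.1 hx.1.2
      · exact absurd haI.2.1 hy.2.2
    · exact ⟨he, x, Sym2.mem_mk_left x y, hx⟩
  · rintro ⟨he, a, ha, haI⟩
    obtain ⟨x, y, rfl, hadj, ⟨hx, hy⟩ | ⟨hx, hy⟩⟩ := diag_elim he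
    · rcases Sym2.mem_iff.mp ha with rfl | rfl
      · exact absurd haI.2.1 hx.2.2
      · exact absurd haI.1.1 hy.1.2
    · exact ⟨he, y, Sym2.mem_mk_right x y, hy⟩

lemma inter₄_comm (A B C D : Set V) : C ∩ D ∩ A ∩ B = A ∩ B ∩ C ∩ D := by
  ext v
  simp only [Set.mem_inter_iff]
  tauto

lemma cornerSep_symm (G : SimpleGraph V) (A B C D : Set V) :
    cornerSep G C D A B = cornerSep G A B C D := by
  unfold cornerSep
  simp only [diag_symm₁, Set.inter_comm (C \ D) (A \ B), inter₄_comm A B C D]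
  ext x
  simp only [Set.mem_union]
  tauto

end Infra4

section Infra5
set_option linter.unusedSectionVars false
set_option linter.unusedVariables false

variable {G : SimpleGraph V} {A B C D R T : Set V} {u v x y : V} {e : Sym2 V}

/-- Constructor for edges of the link of `A` (edges of the separator of `(C,D)`). -/
lemma mem_EA (hadj : G.Adj x y) (hx : x ∈ C \ D) (hy : y ∈ D \ C)
    (hA : x ∈ A \ B ∨ y ∈ A \ B)
    (hnd : x ∈ A ∩ B ∨ y ∈ A ∩ B ∨ (x ∈ A \ B ∧ y ∈ A \ B)) :
    s(x, y) ∈ linkE G C D A B := by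
  refine ⟨mem_sepEdges_of hadj hx hy, ?_, ?_⟩
  · refine notMem_diag hx hy ?_ ?_
    · rintro ⟨h1, h2⟩
      rcases hnd with h | h | h
      · exact h1.2 h.2
      · exact h2.2 h.1
      · exact h2.2 h.2.1
    · rintro ⟨h1, h2⟩
      rcases hnd with h | h | h
      · exact h1.2 h.1
      · exact h2.2 h.2
      · exact h1.2 h.1.1
  · rcases hA with h | h
    · exact ⟨x, Sym2.mem_mk_left x y, h⟩
    · exact ⟨y, Sym2.mem_mk_right x y, h⟩

/-- Constructor for edges of the link of `C` (edges of the separator of `(A,B)`). -/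
lemma mem_EC (hadj : G.Adj x y) (hx : x ∈ A \ B) (hy : y ∈ B \ A)
    (hC : x ∈ C \ D ∨ y ∈ C \ D)
    (hnd : x ∈ C ∩ D ∨ y ∈ C ∩ D ∨ (x ∈ C \ D ∧ y ∈ C \ D)) :
    s(x, y) ∈ linkE G A B C D := by
  refine ⟨mem_sepEdges_of hadj hx hy, ?_, ?_⟩
  · refine notMem_diag hx hy ?_ ?_
    · rintro ⟨h1, h2⟩
      rcases hnd with h | h | h
      · exact h1.2 h.2
      · exact h2.2 h.1
      · exact h2.2 h.2.1
    · rintro ⟨h1, h2⟩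
      rcases hnd with h | h | h
      · exact h1.2 h.1
      · exact h2.2 h.2
      · exact h1.2 h.1.1
  · rcases hC with h | h
    · exact ⟨x, Sym2.mem_mk_left x y, h⟩
    · exact ⟨y, Sym2.mem_mk_right x y, h⟩

/-- Structure of edges in the link of `A`. -/
lemma EA_struct (hU1 : A ∪ B = Set.univ) (he : e ∈ linkE G C D A B) :
    ∃ a b, e = s(a, b) ∧ G.Adj a b ∧
      ((a ∈ (A \ B) ∩ (C \ D) ∧ b ∈ (A \ B) ∩ (D \ C)) ∨
       (a ∈ (A \ B) ∩ (C \ D) ∧ b ∈ (A ∩ B) \ C) ∨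
       (a ∈ (A ∩ B) \ D ∧ b ∈ (A \ B) ∩ (D \ C))) := by
  obtain ⟨⟨hedge, c, hc, d, hd, rfl⟩, hnd, w, hw, hwAB⟩ := he
  have hadj : G.Adj c d := hedge
  have hcend : c ∈ A \ B ∨ d ∈ A \ B := by
    rcases Sym2.mem_iff.mp hw with rfl | rfl
    · exact Or.inl hwAB
    · exact Or.inr hwAB
  refine ⟨c, d, rfl, hadj, ?_⟩
  rcases mem_or_of_union hU1 c with hcA | hcB
  · by_cases hcBm : c ∈ B
    · -- c ∈ A ∩ B, so c ∈ (A∩B)\D and we need d ∈ A\B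
      rcases hcend with h | h
      · exact absurd hcBm h.2
      · exact Or.inr (Or.inr ⟨⟨⟨hcA, hcBm⟩, hc.2⟩, h, hd⟩)
    · -- c ∈ A \ B
      by_cases hdA : d ∈ A
      · by_cases hdB : d ∈ B
        · exact Or.inr (Or.inl ⟨⟨⟨hcA, hcBm⟩, hc⟩, ⟨hdA, hdB⟩, hd.2⟩)
        · exact Or.inl ⟨⟨⟨hcA, hcBm⟩, hc⟩, ⟨hdA, hdB⟩, hd⟩
      · -- d ∈ B \ A : diagonal, contradiction
        have hdB : d ∈ B := (mem_or_of_union hU1 d).resolve_left hdA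
        exact absurd ⟨hedge, c, d, rfl,
          Or.inl ⟨⟨hc, ⟨hcA, hcBm⟩⟩, hd, ⟨hdB, hdA⟩⟩⟩ hnd
  · by_cases hcAm : c ∈ A
    · rcases hcend with h | h
      · exact absurd hcB h.2
      · exact Or.inr (Or.inr ⟨⟨⟨hcAm, hcB⟩, hc.2⟩, h, hd⟩)
    · -- c ∈ B \ A : then the end in A\B must be d, giving a diagonal; contradiction
      rcases hcend with h | h
      · exact absurd hcB h.2
      · exact absurd ⟨hedge, c, d, rfl,
          Or.inr ⟨⟨hc, ⟨hcB, hcAm⟩⟩, hd, h⟩⟩ hnd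

/-- Structure of edges in the link of `C`. -/
lemma EC_struct (hU2 : C ∪ D = Set.univ) (he : e ∈ linkE G A B C D) :
    ∃ a b, e = s(a, b) ∧ G.Adj a b ∧
      ((a ∈ (A \ B) ∩ (C \ D) ∧ b ∈ (B \ A) ∩ (C \ D)) ∨
       (a ∈ (A \ B) ∩ (C \ D) ∧ b ∈ (C ∩ D) \ A) ∨
       (a ∈ (C ∩ D) \ B ∧ b ∈ (B \ A) ∩ (C \ D))) := by
  obtain ⟨⟨hedge, c, hc, d, hd, rfl⟩, hnd, w, hw, hwCD⟩ := he
  have hadj : G.Adj c d := hedge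
  have hcend : c ∈ C \ D ∨ d ∈ C \ D := by
    rcases Sym2.mem_iff.mp hw with rfl | rfl
    · exact Or.inl hwCD
    · exact Or.inr hwCD
  refine ⟨c, d, rfl, hadj, ?_⟩
  rcases mem_or_of_union hU2 c with hcC | hcD
  · by_cases hcDm : c ∈ D
    · -- c ∈ C ∩ D, need d ∈ C \ D
      rcases hcend with h | h
      · exact absurd hcDm h.2
      · exact Or.inr (Or.inr ⟨⟨⟨hcC, hcDm⟩, hc.2⟩, hd, h⟩)
    · -- c ∈ C \ D
      by_cases hdC : d ∈ C
      · by_cases hdD : d ∈ D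
        · exact Or.inr (Or.inl ⟨⟨hc, hcC, hcDm⟩, ⟨hdC, hdD⟩, hd.2⟩)
        · exact Or.inl ⟨⟨hc, hcC, hcDm⟩, hd, hdC, hdD⟩
      · have hdD : d ∈ D := (mem_or_of_union hU2 d).resolve_left hdC
        exact absurd ⟨hedge, c, d, rfl,
          Or.inl ⟨⟨hc, hcC, hcDm⟩, hd, hdD, hdC⟩⟩ hnd
  · by_cases hcCm : c ∈ C
    · rcases hcend with h | h
      · exact absurd hcD h.2
      · exact Or.inr (Or.inr ⟨⟨⟨hcCm, hcD⟩, hc.2⟩, hd, h⟩)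
    · rcases hcend with h | h
      · exact absurd hcD h.2
      · exact absurd ⟨hedge, c, d, rfl,
          Or.inr ⟨⟨hc, hcD, hcCm⟩, hd, h⟩⟩ hnd

/-- Structure of diagonal edges incident with the corner `(A\B) ∩ (C\D)`. -/
lemma Dga_struct (he : e ∈ Dga G A B C D) :
    ∃ a b, e = s(a, b) ∧ G.Adj a b ∧
      a ∈ (A \ B) ∩ (C \ D) ∧ b ∈ (B \ A) ∩ (D \ C) := by
  obtain ⟨hd, w, hw, hwI⟩ := he
  obtain ⟨x, y, rfl, hadj, ⟨hx, hy⟩ | ⟨hx, hy⟩⟩ := diag_elim hd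
  · exact ⟨x, y, rfl, hadj, hx, hy⟩
  · rcases Sym2.mem_iff.mp hw with rfl | rfl
    · exact absurd hwI.2.1 hx.2.2
    · exact absurd hwI.1.1 hy.1.2

/-- Decomposition of the corner separator. -/
lemma cornerSep_eq (G : SimpleGraph V) (A B C D : Set V) :
    cornerSep G A B C D =
      Sum.inl '' ((C ∩ D) \ B ∪ (A ∩ B) \ D ∪ (A ∩ B ∩ C ∩ D)) ∪
      Sum.inr '' (linkE G C D A B ∪ linkE G A B C D ∪ Dga G A B C D) := by
  unfold cornerSep link linkE Dga
  simp only [Set.image_union]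
  ext x
  simp only [Set.mem_union]
  tauto

lemma ncard_corner_W (hU1 : A ∪ B = Set.univ) (hU2 : C ∪ D = Set.univ) :
    ((C ∩ D) \ B ∪ (A ∩ B) \ D ∪ (A ∩ B ∩ C ∩ D)).ncard
      = ((C ∩ D) \ B).ncard + ((A ∩ B) \ D).ncard + (A ∩ B ∩ C ∩ D).ncard := by
  rw [Set.ncard_union_eq, Set.ncard_union_eq]
  · rw [Set.disjoint_left]
    rintro v ⟨hv, hvB⟩ ⟨hv', -⟩
    exact hvB hv'.2
  · rw [Set.disjoint_left]
    rintro v (⟨hv, hvB⟩ | ⟨hv, hvD⟩) hz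
    · exact hvB hz.1.1.2
    · exact hvD hz.2

/-- Ends of separator edges. -/
lemma sepEdges_ends {a b : V} (he : s(a, b) ∈ sepEdges G A B) :
    (a ∈ A \ B ∧ b ∈ B \ A) ∨ (a ∈ B \ A ∧ b ∈ A \ B) := by
  obtain ⟨-, x, hx, y, hy, heq⟩ := he
  rcases Sym2.eq_iff.mp heq with ⟨rfl, rfl⟩ | ⟨rfl, rfl⟩
  · exact Or.inl ⟨hx, hy⟩
  · exact Or.inr ⟨hy, hx⟩

lemma EA_EC_disjoint (hU1 : A ∪ B = Set.univ) :
    Disjoint (linkE G C D A B) (linkE G A B C D) := by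
  rw [Set.disjoint_left]
  intro e he he'
  obtain ⟨a, b, rfl, hadj, hcase⟩ := EA_struct hU1 he
  have hends := sepEdges_ends (G := G) (A := A) (B := B) he'.1
  rcases hcase with ⟨ha, hb⟩ | ⟨ha, hb⟩ | ⟨ha, hb⟩
  · rcases hends with ⟨h1, h2⟩ | ⟨h1, h2⟩
    · exact h2.2 hb.1.1
    · exact h1.2 ha.1.1
  · rcases hends with ⟨h1, h2⟩ | ⟨h1, h2⟩
    · exact h2.2 hb.1.1
    · exact h1.2 ha.1.1
  · rcases hends with ⟨h1, h2⟩ | ⟨h1, h2⟩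
    · exact h1.2 ha.1.2
    · exact h1.2 ha.1.1

/-- The three edge-classes of a corner separator are pairwise disjoint. -/
lemma corner_F_disj (hU1 : A ∪ B = Set.univ) (hU2 : C ∪ D = Set.univ) :
    ((linkE G C D A B ∪ linkE G A B C D ∪ Dga G A B C D : Set (Sym2 V))).ncard
      = (linkE G C D A B).ncard + (linkE G A B C D).ncard + (Dga G A B C D).ncard := by
  rw [Set.ncard_union_eq, Set.ncard_union_eq (EA_EC_disjoint hU1)]
  rw [Set.disjoint_left]
  rintro e (he | he) hd
  · exact he.2.1 (by rw [diag_symm₁]; exact hd.1)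
  · exact he.2.1 hd.1

lemma ncard_cornerSep (hU1 : A ∪ B = Set.univ) (hU2 : C ∪ D = Set.univ) :
    (cornerSep G A B C D).ncard
      = ((C ∩ D) \ B).ncard + ((A ∩ B) \ D).ncard + (A ∩ B ∩ C ∩ D).ncard
        + ((linkE G C D A B ∪ linkE G A B C D ∪ Dga G A B C D : Set (Sym2 V))).ncard := by
  rw [cornerSep_eq, ncard_inl_union_inr, ncard_corner_W hU1 hU2]

end Infra5

section Corner
set_option linter.unusedSectionVars false
set_option linter.unusedVariables false

variable {G : SimpleGraph V} {A B C D R T : Set V} {u v x y : V} {e : Sym2 V}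

/-- The set of "outer" pieces eligible as ends of link edges. -/
abbrev Oset (A B C D : Set V) : Set V :=
  (A \ B) ∩ (D \ C) ∪ (B \ A) ∩ (C \ D) ∪ (A ∩ B) \ C ∪ (C ∩ D) \ A

/-- The elements of `S` incident with an edge of `F`. -/
abbrev endsIn (F : Set (Sym2 V)) (S : Set V) : Set V := {t | t ∈ S ∧ ∃ e ∈ F, t ∈ e}

lemma endsIn_subset (F : Set (Sym2 V)) (S : Set V) : endsIn F S ⊆ S := fun _ h => h.1

lemma I1_not_Oset (hx : x ∈ (A \ B) ∩ (C \ D)) : x ∉ Oset A B C D := by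
  intro hmem
  simp only [Oset, Set.mem_union] at hmem
  rcases hmem with ((h | h) | h) | h
  · exact hx.2.2 h.2.1
  · exact h.1.2 hx.1.1
  · exact hx.1.2 h.1.2
  · exact h.2 hx.1.1

lemma P_not_Oset (hU2 : C ∪ D = Set.univ) (hx : x ∈ (A ∩ B) \ D) :
    x ∉ Oset A B C D := by
  intro hmem
  simp only [Oset, Set.mem_union] at hmem
  rcases hmem with ((h | h) | h) | h
  · exact h.1.2 hx.1.2
  · exact h.1.2 hx.1.1
  · rcases mem_or_of_union hU2 x with hc | hd
    · exact h.2 hc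
    · exact hx.2 hd
  · exact h.2 hx.1.1

lemma P'_not_Oset (hU1 : A ∪ B = Set.univ) (hx : x ∈ (C ∩ D) \ B) :
    x ∉ Oset A B C D := by
  intro hmem
  simp only [Oset, Set.mem_union] at hmem
  rcases hmem with ((h | h) | h) | h
  · exact h.2.2 hx.1.1
  · exact h.2.2 hx.1.2
  · exact hx.2 h.1.2
  · rcases mem_or_of_union hU1 x with ha | hb
    · exact h.2 ha
    · exact hx.2 hb

lemma I4_not_Oset (hx : x ∈ (B \ A) ∩ (D \ C)) : x ∉ Oset A B C D := by
  intro hmem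
  simp only [Oset, Set.mem_union] at hmem
  rcases hmem with ((h | h) | h) | h
  · exact hx.1.2 h.1.1
  · exact hx.2.2 h.2.1
  · exact hx.1.2 h.1.1
  · exact hx.2.2 h.1.1

lemma endsO_uniq (hU1 : A ∪ B = Set.univ) (hU2 : C ∪ D = Set.univ) :
    ∀ e ∈ linkE G C D A B ∪ linkE G A B C D,
      ∀ v ∈ endsIn (linkE G C D A B ∪ linkE G A B C D) (Oset A B C D), v ∈ e →
      ∀ w ∈ endsIn (linkE G C D A B ∪ linkE G A B C D) (Oset A B C D), w ∈ e → v = w := by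
  rintro e (he | he) v hv hve w hw hwe
  · obtain ⟨a, b, rfl, hadj, hcase⟩ := EA_struct hU1 he
    have hnota : a ∉ Oset A B C D := by
      rcases hcase with ⟨ha, -⟩ | ⟨ha, -⟩ | ⟨ha, -⟩
      · exact I1_not_Oset ha
      · exact I1_not_Oset ha
      · exact P_not_Oset hU2 ha
    have hv' : v = b := by
      rcases Sym2.mem_iff.mp hve with rfl | rfl
      · exact absurd hv.1 hnota
      · rfl
    have hw' : w = b := by
      rcases Sym2.mem_iff.mp hwe with rfl | rfl
      · exact absurd hw.1 hnota
      · rfl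
    rw [hv', hw']
  · obtain ⟨a, b, rfl, hadj, hcase⟩ := EC_struct hU2 he
    have hnota : a ∉ Oset A B C D := by
      rcases hcase with ⟨ha, -⟩ | ⟨ha, -⟩ | ⟨ha, -⟩
      · exact I1_not_Oset ha
      · exact I1_not_Oset ha
      · exact P'_not_Oset hU1 ha
    have hv' : v = b := by
      rcases Sym2.mem_iff.mp hve with rfl | rfl
      · exact absurd hv.1 hnota
      · rfl
    have hw' : w = b := by
      rcases Sym2.mem_iff.mp hwe with rfl | rfl
      · exact absurd hw.1 hnota
      · rfl
    rw [hv', hw']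

lemma ncard_endsO_le (hU1 : A ∪ B = Set.univ) (hU2 : C ∪ D = Set.univ) :
    (endsIn (linkE G C D A B ∪ linkE G A B C D) (Oset A B C D)).ncard
      ≤ (linkE G C D A B ∪ linkE G A B C D : Set (Sym2 V)).ncard :=
  ncard_le_of_unique_edge (fun v hv => hv.2)
    (fun e he v hv hve w hw hwe => endsO_uniq hU1 hU2 e he v hv hve w hw hwe)

lemma ends1_uniq : ∀ e ∈ Dga G A B C D,
    ∀ v ∈ endsIn (Dga G A B C D) ((A \ B) ∩ (C \ D)), v ∈ e →
    ∀ w ∈ endsIn (Dga G A B C D) ((A \ B) ∩ (C \ D)), w ∈ e → v = w := by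
  intro e he v hv hve w hw hwe
  obtain ⟨a, b, rfl, hadj, ha, hb⟩ := Dga_struct he
  have hv' : v = a := by
    rcases Sym2.mem_iff.mp hve with rfl | rfl
    · rfl
    · exact absurd hv.1.1.1 hb.1.2
  have hw' : w = a := by
    rcases Sym2.mem_iff.mp hwe with rfl | rfl
    · rfl
    · exact absurd hw.1.1.1 hb.1.2
  rw [hv', hw']

lemma ends4_uniq : ∀ e ∈ Dga G A B C D,
    ∀ v ∈ endsIn (Dga G A B C D) ((B \ A) ∩ (D \ C)), v ∈ e →
    ∀ w ∈ endsIn (Dga G A B C D) ((B \ A) ∩ (D \ C)), w ∈ e → v = w := by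
  intro e he v hv hve w hw hwe
  obtain ⟨a, b, rfl, hadj, ha, hb⟩ := Dga_struct he
  have hv' : v = b := by
    rcases Sym2.mem_iff.mp hve with rfl | rfl
    · exact absurd hv.1.1.1 ha.1.2
    · rfl
  have hw' : w = b := by
    rcases Sym2.mem_iff.mp hwe with rfl | rfl
    · exact absurd hw.1.1.1 ha.1.2
    · rfl
  rw [hv', hw']

lemma ncard_ends1_le :
    (endsIn (Dga G A B C D) ((A \ B) ∩ (C \ D))).ncard ≤ (Dga G A B C D).ncard :=
  ncard_le_of_unique_edge (fun v hv => hv.2) ends1_uniq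

lemma ncard_ends4_le :
    (endsIn (Dga G A B C D) ((B \ A) ∩ (D \ C))).ncard ≤ (Dga G A B C D).ncard :=
  ncard_le_of_unique_edge (fun v hv => hv.2) ends4_uniq

/-- classification of vertices in the corner `A ∩ C`. -/
lemma corner_region (hx : x ∈ A ∩ C) :
    x ∈ (A \ B) ∩ (C \ D) ∨ x ∈ (A ∩ B) \ D ∨ x ∈ (C ∩ D) \ B ∨ x ∈ A ∩ B ∩ C ∩ D := by
  by_cases hB : x ∈ B <;> by_cases hD : x ∈ D
  · exact Or.inr (Or.inr (Or.inr ⟨⟨⟨hx.1, hB⟩, hx.2⟩, hD⟩))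
  · exact Or.inr (Or.inl ⟨⟨hx.1, hB⟩, hD⟩)
  · exact Or.inr (Or.inr (Or.inl ⟨⟨hx.2, hD⟩, hB⟩))
  · exact Or.inl ⟨⟨hx.1, hB⟩, ⟨hx.2, hD⟩⟩

/-- A boundary edge from the interior of the corner `A ∩ C` is a link edge with the
other end in `Oset`, or a diagonal edge to the opposite corner. -/
lemma boundary_edge (hU1 : A ∪ B = Set.univ) (hU2 : C ∪ D = Set.univ)
    (hadj : G.Adj x y) (hx : x ∈ (A \ B) ∩ (C \ D)) (hy : y ∉ A ∩ C) :
    (s(x, y) ∈ linkE G C D A B ∪ linkE G A B C D ∧ y ∈ Oset A B C D) ∨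
    (s(x, y) ∈ Dga G A B C D ∧ y ∈ (B \ A) ∩ (D \ C)) := by
  rcases piece_cases hU1 hU2 y with hp | hp | hp | hp | hp | hp | hp | hp | hp
  · exact absurd ⟨hp.1.1, hp.2.1⟩ hy
  · -- y ∈ I₂ : link edge of A
    exact Or.inl ⟨Or.inl (mem_EA hadj hx.2 hp.2 (Or.inl hx.1)
      (Or.inr (Or.inr ⟨hx.1, hp.1⟩))), Or.inl (Or.inl (Or.inl hp))⟩
  · -- y ∈ P' ⊆ A ∩ C
    exact absurd ⟨(mem_or_of_union hU1 y).resolve_right hp.2, hp.1.1⟩ hy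
  · -- y ∈ I₃ : link edge of C
    exact Or.inl ⟨Or.inr (mem_EC hadj hx.1 hp.1 (Or.inl hx.2)
      (Or.inr (Or.inr ⟨hx.2, hp.2⟩))), Or.inl (Or.inl (Or.inr hp))⟩
  · -- y ∈ I₄ : diagonal edge
    exact Or.inr ⟨⟨⟨G.mem_edgeSet.mpr hadj, x, y, rfl, Or.inl ⟨hx, hp⟩⟩,
      x, Sym2.mem_mk_left x y, hx⟩, hp⟩
  · -- y ∈ Q' : link edge of C
    have hyBA : y ∈ B \ A := ⟨(mem_or_of_union hU1 y).resolve_left hp.2, hp.2⟩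
    exact Or.inl ⟨Or.inr (mem_EC hadj hx.1 hyBA (Or.inl hx.2)
      (Or.inr (Or.inl hp.1))), Or.inr hp⟩
  · -- y ∈ P ⊆ A ∩ C
    exact absurd ⟨hp.1.1, (mem_or_of_union hU2 y).resolve_right hp.2⟩ hy
  · -- y ∈ Q : link edge of A
    have hyDC : y ∈ D \ C := ⟨(mem_or_of_union hU2 y).resolve_left hp.2, hp.2⟩
    exact Or.inl ⟨Or.inl (mem_EA hadj hx.2 hyDC (Or.inl hx.1)
      (Or.inr (Or.inl hp.1))), Or.inl (Or.inr hp)⟩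
  · -- y ∈ Z ⊆ A ∩ C
    exact absurd ⟨hp.1.1.1, hp.1.2⟩ hy

end Corner

section Case1
set_option linter.unusedSectionVars false
set_option linter.unusedVariables false
set_option maxHeartbeats 1000000

variable {G : SimpleGraph V} {A B C D : Set V} {u v x y : V} {e : Sym2 V}

lemma EAEC_disj_Dga (hU1 : A ∪ B = Set.univ) :
    Disjoint (linkE G C D A B ∪ linkE G A B C D : Set (Sym2 V)) (Dga G A B C D) := by
  rw [Set.disjoint_left]
  rintro e (he | he) hd
  · exact he.2.1 (by rw [diag_symm₁]; exact hd.1)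
  · exact he.2.1 hd.1

/-- Numeric splitting of the order of a corner separator. -/
lemma corner_numbers (hU1 : A ∪ B = Set.univ) (hU2 : C ∪ D = Set.univ)
    (hσ : (cornerSep G A B C D).ncard ≤ 2) :
    ((C ∩ D) \ B ∪ (A ∩ B) \ D ∪ (A ∩ B ∩ C ∩ D) : Set V).ncard
      + (linkE G C D A B ∪ linkE G A B C D : Set (Sym2 V)).ncard
      + (Dga G A B C D).ncard ≤ 2 := by
  have h1 := ncard_cornerSep (G := G) hU1 hU2
  have h2 := corner_F_disj (G := G) hU1 hU2
  have h3 := ncard_corner_W (A := A) (B := B) (C := C) (D := D) hU1 hU2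
  have h4 : (linkE G C D A B ∪ linkE G A B C D : Set (Sym2 V)).ncard
      = (linkE G C D A B).ncard + (linkE G A B C D).ncard :=
    Set.ncard_union_eq (EA_EC_disjoint hU1) (Set.toFinite _) (Set.toFinite _)
  omega

lemma I1_not_W (hr : x ∈ (A \ B) ∩ (C \ D)) :
    x ∉ ((C ∩ D) \ B ∪ (A ∩ B) \ D ∪ (A ∩ B ∩ C ∩ D) : Set V) := by
  intro hmem
  simp only [Set.mem_union] at hmem
  rcases hmem with (h | h) | h
  · exact hr.2.2 h.1.2
  · exact hr.1.2 h.1.2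
  · exact hr.1.2 h.1.1.2

lemma I4_not_W (hr : x ∈ (B \ A) ∩ (D \ C)) :
    x ∉ ((C ∩ D) \ B ∪ (A ∩ B) \ D ∪ (A ∩ B ∩ C ∩ D) : Set V) := by
  intro hmem
  simp only [Set.mem_union] at hmem
  rcases hmem with (h | h) | h
  · exact hr.2.2 h.1.1
  · exact hr.1.2 h.1.1
  · exact hr.1.2 h.1.1.1

lemma I4_not_corner (hr : x ∈ (B \ A) ∩ (D \ C)) : x ∉ A ∩ C :=
  fun h => hr.1.2 h.1

lemma corner_case1 (h3 : KConnected 3 G)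
    (hU1 : A ∪ B = Set.univ) (hU2 : C ∪ D = Set.univ)
    (hI1 : ((A \ B) ∩ (C \ D)).Nonempty) (hI4 : ((B \ A) ∩ (D \ C)).Nonempty)
    (hσ : (cornerSep G A B C D).ncard ≤ 2) : False := by
  have hnums := corner_numbers hU1 hU2 hσ
  have heOle := ncard_endsO_le (G := G) hU1 hU2
  have he1le := ncard_ends1_le (G := G) (A := A) (B := B) (C := C) (D := D)
  have he4le := ncard_ends4_le (G := G) (A := A) (B := B) (C := C) (D := D)
  obtain ⟨r0, hr0⟩ := hI1
  obtain ⟨t0, ht0⟩ := hI4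
  by_cases hout : ∃ t, t ∉ A ∩ C ∧
      t ∉ (((C ∩ D) \ B ∪ (A ∩ B) \ D ∪ (A ∩ B ∩ C ∩ D))
        ∪ endsIn (linkE G C D A B ∪ linkE G A B C D) (Oset A B C D)
        ∪ endsIn (Dga G A B C D) ((B \ A) ∩ (D \ C)) : Set V)
  · refine cut_lemma h3 (R := A ∩ C) ?_ ?_ ⟨r0, ⟨hr0.1.1, hr0.2.1⟩, ?_⟩ hout
    · calc _ ≤ (((C ∩ D) \ B ∪ (A ∩ B) \ D ∪ (A ∩ B ∩ C ∩ D))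
            ∪ endsIn (linkE G C D A B ∪ linkE G A B C D) (Oset A B C D) : Set V).ncard
            + (endsIn (Dga G A B C D) ((B \ A) ∩ (D \ C))).ncard := Set.ncard_union_le _ _
        _ ≤ ((C ∩ D) \ B ∪ (A ∩ B) \ D ∪ (A ∩ B ∩ C ∩ D) : Set V).ncard
            + (endsIn (linkE G C D A B ∪ linkE G A B C D) (Oset A B C D)).ncard
            + (endsIn (Dga G A B C D) ((B \ A) ∩ (D \ C))).ncard := by
              have := Set.ncard_union_le ((C ∩ D) \ B ∪ (A ∩ B) \ D ∪ (A ∩ B ∩ C ∩ D) : Set V)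
                (endsIn (linkE G C D A B ∪ linkE G A B C D) (Oset A B C D))
              omega
        _ ≤ 2 := by omega
    · intro x hxR hxT y hyR hyT hadj
      rcases corner_region hxR with hx | hx | hx | hx
      · rcases boundary_edge hU1 hU2 hadj hx hyR with ⟨hef, hyO⟩ | ⟨hd, hy4⟩
        · exact hyT (Or.inl (Or.inr ⟨hyO, _, hef, Sym2.mem_mk_right x y⟩))
        · exact hyT (Or.inr ⟨hy4, _, hd, Sym2.mem_mk_right x y⟩)
      · exact hxT (Or.inl (Or.inl (Or.inl (Or.inr hx))))
      · exact hxT (Or.inl (Or.inl (Or.inl (Or.inl hx))))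
      · exact hxT (Or.inl (Or.inl (Or.inr hx)))
    · intro hmem
      simp only [Set.mem_union] at hmem
      rcases hmem with (h | h) | h
      · exact I1_not_W hr0 (by simp only [Set.mem_union]; tauto)
      · exact I1_not_Oset hr0 h.1
      · exact h.1.1.2 hr0.1.1
  · push_neg at hout
    by_cases hin : ∃ r, r ∈ (A \ B) ∩ (C \ D) ∧
        r ∉ endsIn (Dga G A B C D) ((A \ B) ∩ (C \ D))
    · obtain ⟨r, hrI, hre⟩ := hin
      refine cut_lemma h3 (R := A ∩ C)
        (T := ((C ∩ D) \ B ∪ (A ∩ B) \ D ∪ (A ∩ B ∩ C ∩ D))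
          ∪ endsIn (linkE G C D A B ∪ linkE G A B C D) (Oset A B C D)
          ∪ endsIn (Dga G A B C D) ((A \ B) ∩ (C \ D)))
        ?_ ?_ ⟨r, ⟨hrI.1.1, hrI.2.1⟩, ?_⟩ ⟨t0, I4_not_corner ht0, ?_⟩
      · calc _ ≤ (((C ∩ D) \ B ∪ (A ∩ B) \ D ∪ (A ∩ B ∩ C ∩ D))
              ∪ endsIn (linkE G C D A B ∪ linkE G A B C D) (Oset A B C D) : Set V).ncard
              + (endsIn (Dga G A B C D) ((A \ B) ∩ (C \ D))).ncard := Set.ncard_union_le _ _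
          _ ≤ 2 := by
              have := Set.ncard_union_le ((C ∩ D) \ B ∪ (A ∩ B) \ D ∪ (A ∩ B ∩ C ∩ D) : Set V)
                (endsIn (linkE G C D A B ∪ linkE G A B C D) (Oset A B C D))
              omega
      · intro x hxR hxT y hyR hyT hadj
        rcases corner_region hxR with hx | hx | hx | hx
        · rcases boundary_edge hU1 hU2 hadj hx hyR with ⟨hef, hyO⟩ | ⟨hd, hy4⟩
          · exact hyT (Or.inl (Or.inr ⟨hyO, _, hef, Sym2.mem_mk_right x y⟩))
          · exact hxT (Or.inr ⟨hx, _, hd, Sym2.mem_mk_left x y⟩)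
        · exact hxT (Or.inl (Or.inl (Or.inl (Or.inr hx))))
        · exact hxT (Or.inl (Or.inl (Or.inl (Or.inl hx))))
        · exact hxT (Or.inl (Or.inl (Or.inr hx)))
      · intro hmem
        simp only [Set.mem_union] at hmem
        rcases hmem with (h | h) | h
        · exact I1_not_W hrI (by simp only [Set.mem_union]; tauto)
        · exact I1_not_Oset hrI h.1
        · exact hre h
      · intro hmem
        simp only [Set.mem_union] at hmem
        rcases hmem with (h | h) | h
        · exact I4_not_W ht0 (by simp only [Set.mem_union]; tauto)
        · exact I4_not_Oset ht0 h.1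
        · exact ht0.1.2 h.1.1.1
    · push_neg at hin
      -- every vertex lies in e1 ∪ W ∪ eO ∪ e4
      have huniv : (Set.univ : Set V) ⊆
          endsIn (Dga G A B C D) ((A \ B) ∩ (C \ D))
          ∪ ((C ∩ D) \ B ∪ (A ∩ B) \ D ∪ (A ∩ B ∩ C ∩ D))
          ∪ endsIn (linkE G C D A B ∪ linkE G A B C D) (Oset A B C D)
          ∪ endsIn (Dga G A B C D) ((B \ A) ∩ (D \ C)) := by
        rintro w -
        by_cases hw : w ∈ A ∩ C
        · rcases corner_region hw with h | h | h | h
          · exact Or.inl (Or.inl (Or.inl (hin w h)))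
          · exact Or.inl (Or.inl (Or.inr (Or.inl (Or.inr h))))
          · exact Or.inl (Or.inl (Or.inr (Or.inl (Or.inl h))))
          · exact Or.inl (Or.inl (Or.inr (Or.inr h)))
        · rcases hout w hw with (h | h) | h
          · exact Or.inl (Or.inl (Or.inr h))
          · exact Or.inl (Or.inr h)
          · exact Or.inr h
      have hcardle : Nat.card V ≤ 2 + (Dga G A B C D).ncard := by
        have h1 : (Set.univ : Set V).ncard ≤ _ := Set.ncard_le_ncard huniv (Set.toFinite _)
        rw [Set.ncard_univ] at h1
        have h2 := Set.ncard_union_le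
          (endsIn (Dga G A B C D) ((A \ B) ∩ (C \ D))
            ∪ ((C ∩ D) \ B ∪ (A ∩ B) \ D ∪ (A ∩ B ∩ C ∩ D))
            ∪ endsIn (linkE G C D A B ∪ linkE G A B C D) (Oset A B C D))
          (endsIn (Dga G A B C D) ((B \ A) ∩ (D \ C)))
        have h3 := Set.ncard_union_le
          (endsIn (Dga G A B C D) ((A \ B) ∩ (C \ D))
            ∪ ((C ∩ D) \ B ∪ (A ∩ B) \ D ∪ (A ∩ B ∩ C ∩ D)))
          (endsIn (linkE G C D A B ∪ linkE G A B C D) (Oset A B C D))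
        have h4 := Set.ncard_union_le
          (endsIn (Dga G A B C D) ((A \ B) ∩ (C \ D)))
          (((C ∩ D) \ B ∪ (A ∩ B) \ D ∪ (A ∩ B ∩ C ∩ D) : Set V))
        omega
      have hVge := h3.1
      have hda : (Dga G A B C D).ncard = 2 := by
        have : (Dga G A B C D).ncard ≤ 2 := by omega
        omega
      have hWzero : ((C ∩ D) \ B ∪ (A ∩ B) \ D ∪ (A ∩ B ∩ C ∩ D) : Set V) = ∅ :=
        (Set.ncard_eq_zero (Set.toFinite _)).mp (by omega)
      have hEACzero : (linkE G C D A B ∪ linkE G A B C D : Set (Sym2 V)) = ∅ :=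
        (Set.ncard_eq_zero (Set.toFinite _)).mp (by omega)
      obtain ⟨g1, g2, hgne, hDgapair⟩ := Set.ncard_eq_two.mp hda
      have hg1 : g1 ∈ Dga G A B C D := by rw [hDgapair]; exact Or.inl rfl
      have hg2 : g2 ∈ Dga G A B C D := by rw [hDgapair]; exact Or.inr rfl
      obtain ⟨a1, b1, hg1eq, hadj1, ha1, hb1⟩ := Dga_struct hg1
      obtain ⟨a2, b2, hg2eq, hadj2, ha2, hb2⟩ := Dga_struct hg2
      have hI1sub : (A \ B) ∩ (C \ D) ⊆ {a1, a2} := by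
        intro r hr
        obtain ⟨-, e, heD, hre⟩ := hin r hr
        rw [hDgapair] at heD
        rcases heD with rfl | rfl
        · rw [hg1eq] at hre
          rcases Sym2.mem_iff.mp hre with rfl | rfl
          · exact Or.inl rfl
          · exact absurd hr.1.1 hb1.1.2
        · rw [hg2eq] at hre
          rcases Sym2.mem_iff.mp hre with rfl | rfl
          · exact Or.inr rfl
          · exact absurd hr.1.1 hb2.1.2
      have he4sub : endsIn (Dga G A B C D) ((B \ A) ∩ (D \ C)) ⊆ {b1, b2} := by
        rintro t ⟨htI, e, heD, hte⟩
        rw [hDgapair] at heD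
        rcases heD with rfl | rfl
        · rw [hg1eq] at hte
          rcases Sym2.mem_iff.mp hte with rfl | rfl
          · exact absurd ha1.1.1 htI.1.2
          · exact Or.inl rfl
        · rw [hg2eq] at hte
          rcases Sym2.mem_iff.mp hte with rfl | rfl
          · exact absurd ha2.1.1 htI.1.2
          · exact Or.inr rfl
      have hunivsub : (Set.univ : Set V) ⊆ {a1, a2, b1, b2} := by
        intro w hw
        rcases huniv hw with ((h | h) | h) | h
        · rcases hI1sub (endsIn_subset _ _ h) with h' | h'
          · exact Or.inl h'
          · exact Or.inr (Or.inl h')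
        · rw [hWzero] at h
          exact h.elim
        · obtain ⟨-, e, he, -⟩ := h
          rw [hEACzero] at he
          exact he.elim
        · rcases he4sub h with h' | h'
          · exact Or.inr (Or.inr (Or.inl h'))
          · exact Or.inr (Or.inr (Or.inr h'))
      have hab : ∀ a b : V, a ∈ (A \ B) ∩ (C \ D) → b ∈ (B \ A) ∩ (D \ C) → a ≠ b :=
        fun a b ha hb h => hb.1.2 (h ▸ ha.1.1)
      have hane : a1 ≠ a2 := by
        intro h
        have hsub : (Set.univ : Set V) ⊆ {a1, b1, b2} := by
          intro w hw
          rcases hunivsub hw with h' | h' | h' | h'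
          · exact Or.inl h'
          · exact Or.inl (h ▸ h')
          · exact Or.inr (Or.inl h')
          · exact Or.inr (Or.inr h')
        have h1 : (Set.univ : Set V).ncard ≤ ({a1, b1, b2} : Set V).ncard :=
          Set.ncard_le_ncard hsub (Set.toFinite _)
        rw [Set.ncard_univ] at h1
        have h2 := Set.ncard_insert_le a1 ({b1, b2} : Set V)
        have h3 := Set.ncard_insert_le b1 ({b2} : Set V)
        have h4 : ({b2} : Set V).ncard = 1 := Set.ncard_singleton _
        omega
      have hbne : b1 ≠ b2 := by
        intro h
        have hsub : (Set.univ : Set V) ⊆ {a1, a2, b1} := by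
          intro w hw
          rcases hunivsub hw with h' | h' | h' | h'
          · exact Or.inl h'
          · exact Or.inr (Or.inl h')
          · exact Or.inr (Or.inr h')
          · exact Or.inr (Or.inr (h ▸ h'))
        have h1 : (Set.univ : Set V).ncard ≤ ({a1, a2, b1} : Set V).ncard :=
          Set.ncard_le_ncard hsub (Set.toFinite _)
        rw [Set.ncard_univ] at h1
        have h2 := Set.ncard_insert_le a1 ({a2, b1} : Set V)
        have h3 := Set.ncard_insert_le a2 ({b1} : Set V)
        have h4 : ({b1} : Set V).ncard = 1 := Set.ncard_singleton _
        omega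
      have hcard4 : Nat.card V ≤ 4 := by
        have h1 : (Set.univ : Set V).ncard ≤ ({a1, a2, b1, b2} : Set V).ncard :=
          Set.ncard_le_ncard hunivsub (Set.toFinite _)
        rw [Set.ncard_univ] at h1
        have h2 := Set.ncard_insert_le a1 ({a2, b1, b2} : Set V)
        have h3 := Set.ncard_insert_le a2 ({b1, b2} : Set V)
        have h4 := Set.ncard_insert_le b1 ({b2} : Set V)
        have h5 : ({b2} : Set V).ncard = 1 := Set.ncard_singleton _
        omega
      -- the crossing edge a1 b2 must be a diagonal in Dga, contradiction
      have hadj12 : G.Adj a1 b2 := kconn_adj h3 hcard4 (hab a1 b2 ha1 hb2)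
      have hmem12 : s(a1, b2) ∈ Dga G A B C D :=
        ⟨⟨G.mem_edgeSet.mpr hadj12, a1, b2, rfl, Or.inl ⟨ha1, hb2⟩⟩,
          a1, Sym2.mem_mk_left _ _, ha1⟩
      rw [hDgapair] at hmem12
      rcases hmem12 with h | h
      · rw [hg1eq] at h
        rcases Sym2.eq_iff.mp h with ⟨-, h2⟩ | ⟨h1, -⟩
        · exact hbne h2.symm
        · exact hab a1 b1 ha1 hb1 h1
      · rw [hg2eq] at h
        rcases Sym2.eq_iff.mp h with ⟨h1, -⟩ | ⟨h1, -⟩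
        · exact hane h1
        · exact hab a1 b2 ha1 hb2 h1

end Case1

section Case3
set_option linter.unusedSectionVars false
set_option linter.unusedVariables false
set_option maxHeartbeats 1000000

variable {G : SimpleGraph V} {A B C D : Set V} {u v x y : V} {e : Sym2 V}

lemma corner_case3 (h3 : KConnected 3 G)
    (hU1 : A ∪ B = Set.univ) (hU2 : C ∪ D = Set.univ)
    (hBA : (B \ A).Nonempty) (hDC : (D \ C).Nonempty)
    (hI1 : ((A \ B) ∩ (C \ D)).Nonempty) (hI4 : (B \ A) ∩ (D \ C) = ∅)
    (hσ : (cornerSep G A B C D).ncard ≤ 2) : False := by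
  have hnums := corner_numbers hU1 hU2 hσ
  have heOle := ncard_endsO_le (G := G) hU1 hU2
  have hDga : Dga G A B C D = ∅ := by
    rw [Set.eq_empty_iff_forall_notMem]
    intro e he
    obtain ⟨a, b, -, -, ha, hb⟩ := Dga_struct he
    rw [hI4] at hb
    exact hb
  obtain ⟨r0, hr0⟩ := hI1
  by_cases hout : ∃ t, t ∉ A ∩ C ∧
      t ∉ (((C ∩ D) \ B ∪ (A ∩ B) \ D ∪ (A ∩ B ∩ C ∩ D))
        ∪ endsIn (linkE G C D A B ∪ linkE G A B C D) (Oset A B C D) : Set V)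
  · refine cut_lemma h3 (R := A ∩ C) ?_ ?_ ⟨r0, ⟨hr0.1.1, hr0.2.1⟩, ?_⟩ hout
    · have h1 := Set.ncard_union_le ((C ∩ D) \ B ∪ (A ∩ B) \ D ∪ (A ∩ B ∩ C ∩ D) : Set V)
        (endsIn (linkE G C D A B ∪ linkE G A B C D) (Oset A B C D))
      omega
    · intro x hxR hxT y hyR hyT hadj
      rcases corner_region hxR with hx | hx | hx | hx
      · rcases boundary_edge hU1 hU2 hadj hx hyR with ⟨hef, hyO⟩ | ⟨hd, hy4⟩
        · exact hyT (Or.inr ⟨hyO, _, hef, Sym2.mem_mk_right x y⟩)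
        · rw [hDga] at hd
          exact hd
      · exact hxT (Or.inl (Or.inl (Or.inr hx)))
      · exact hxT (Or.inl (Or.inl (Or.inl hx)))
      · exact hxT (Or.inl (Or.inr hx))
    · intro hmem
      simp only [Set.mem_union] at hmem
      rcases hmem with h | h
      · exact I1_not_W hr0 (by simp only [Set.mem_union]; tauto)
      · exact I1_not_Oset hr0 h.1
  · push_neg at hout
    have hdisjBD : ∀ t, t ∈ B \ A → t ∈ D \ C → False := by
      intro t h1 h2
      have : t ∈ (B \ A) ∩ (D \ C) := ⟨h1, h2⟩
      rw [hI4] at this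
      exact this
    have hBAsub : ∀ t ∈ B \ A,
        t ∈ endsIn (linkE G C D A B ∪ linkE G A B C D) (Oset A B C D) := by
      intro t ht
      have htnc : t ∉ A ∩ C := fun h => ht.2 h.1
      rcases hout t htnc with h | h
      · exfalso
        simp only [Set.mem_union] at h
        rcases h with (h | h) | h
        · exact h.2 ht.1
        · exact ht.2 h.1.1
        · exact ht.2 h.1.1.1
      · exact h
    have hDCsub : ∀ t ∈ D \ C,
        t ∈ endsIn (linkE G C D A B ∪ linkE G A B C D) (Oset A B C D) := by
      intro t ht
      have htnc : t ∉ A ∩ C := fun h => ht.2 h.2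
      rcases hout t htnc with h | h
      · exfalso
        simp only [Set.mem_union] at h
        rcases h with (h | h) | h
        · exact ht.2 h.1.1
        · exact h.2 ht.1
        · exact ht.2 h.1.2
      · exact h
    obtain ⟨u1, hu1⟩ := hBA
    obtain ⟨u2, hu2⟩ := hDC
    have hu12 : u1 ≠ u2 := fun h => hdisjBD u1 hu1 (h ▸ hu2)
    have hpairsub : ({u1, u2} : Set V) ⊆
        endsIn (linkE G C D A B ∪ linkE G A B C D) (Oset A B C D) := by
      rintro t (rfl | rfl)
      · exact hBAsub _ hu1
      · exact hDCsub _ hu2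
    have h2le : 2 ≤ (endsIn (linkE G C D A B ∪ linkE G A B C D) (Oset A B C D)).ncard := by
      have := Set.ncard_le_ncard hpairsub (Set.toFinite _)
      rw [Set.ncard_pair hu12] at this
      exact this
    have hEAEC2 : (linkE G C D A B ∪ linkE G A B C D : Set (Sym2 V)).ncard = 2 := by omega
    have hWzero : ((C ∩ D) \ B ∪ (A ∩ B) \ D ∪ (A ∩ B ∩ C ∩ D) : Set V) = ∅ :=
      (Set.ncard_eq_zero (Set.toFinite _)).mp (by omega)
    have hP'e : ∀ w : V, w ∉ (C ∩ D) \ B := by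
      intro w hw
      have : w ∈ ((C ∩ D) \ B ∪ (A ∩ B) \ D ∪ (A ∩ B ∩ C ∩ D) : Set V) :=
        Or.inl (Or.inl hw)
      rw [hWzero] at this
      exact this
    have hPe : ∀ w : V, w ∉ (A ∩ B) \ D := by
      intro w hw
      have : w ∈ ((C ∩ D) \ B ∪ (A ∩ B) \ D ∪ (A ∩ B ∩ C ∩ D) : Set V) :=
        Or.inl (Or.inr hw)
      rw [hWzero] at this
      exact this
    have hZe : ∀ w : V, w ∉ A ∩ B ∩ C ∩ D := by
      intro w hw
      have : w ∈ ((C ∩ D) \ B ∪ (A ∩ B) \ D ∪ (A ∩ B ∩ C ∩ D) : Set V) :=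
        Or.inr hw
      rw [hWzero] at this
      exact this
    have heOeq : ({u1, u2} : Set V)
        = endsIn (linkE G C D A B ∪ linkE G A B C D) (Oset A B C D) :=
      Set.eq_of_subset_of_ncard_le hpairsub (by rw [Set.ncard_pair hu12]; omega)
        (Set.toFinite _)
    obtain ⟨g1, g2, hgne, hpairEF⟩ := Set.ncard_eq_two.mp hEAEC2
    have hstruct : ∀ g ∈ (linkE G C D A B ∪ linkE G A B C D : Set (Sym2 V)),
        ∃ a b, g = s(a, b) ∧ a ∈ (A \ B) ∩ (C \ D) ∧ b ∉ (A \ B) ∩ (C \ D) := by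
      rintro g (hg | hg)
      · obtain ⟨a, b, rfl, hadj, hcase⟩ := EA_struct hU1 hg
        rcases hcase with ⟨ha, hb⟩ | ⟨ha, hb⟩ | ⟨ha, hb⟩
        · exact ⟨a, b, rfl, ha, fun h => h.2.2 hb.2.1⟩
        · exact ⟨a, b, rfl, ha, fun h => h.1.2 hb.1.2⟩
        · exact absurd ha (hPe a)
      · obtain ⟨a, b, rfl, hadj, hcase⟩ := EC_struct hU2 hg
        rcases hcase with ⟨ha, hb⟩ | ⟨ha, hb⟩ | ⟨ha, hb⟩
        · exact ⟨a, b, rfl, ha, fun h => h.1.2 hb.1.1⟩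
        · exact ⟨a, b, rfl, ha, fun h => hb.2 h.1.1⟩
        · exact absurd ha (hP'e a)
    have hg1m : g1 ∈ (linkE G C D A B ∪ linkE G A B C D : Set (Sym2 V)) := by
      rw [hpairEF]; exact Or.inl rfl
    have hg2m : g2 ∈ (linkE G C D A B ∪ linkE G A B C D : Set (Sym2 V)) := by
      rw [hpairEF]; exact Or.inr rfl
    obtain ⟨a1, b1, hg1eq, ha1, hb1⟩ := hstruct g1 hg1m
    obtain ⟨a2, b2, hg2eq, ha2, hb2⟩ := hstruct g2 hg2m
    have hcornerI1 : ∀ w ∈ A ∩ C, w ∈ (A \ B) ∩ (C \ D) := by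
      intro w hw
      rcases corner_region hw with h | h | h | h
      · exact h
      · exact absurd h (hPe w)
      · exact absurd h (hP'e w)
      · exact absurd h (hZe w)
    have hu1nc : u1 ∉ A ∩ C := fun h => hu1.2 h.1
    have hu2nc : u2 ∉ A ∩ C := fun h => hu2.2 h.2
    by_cases hr : ∃ r', r' ∈ (A \ B) ∩ (C \ D) ∧ r' ∉ ({a1, a2} : Set V)
    · obtain ⟨r', hr', hr'T⟩ := hr
      refine cut_lemma h3 (R := A ∩ C) (T := {a1, a2}) ?_ ?_
        ⟨r', ⟨hr'.1.1, hr'.2.1⟩, hr'T⟩ ⟨u1, hu1nc, ?_⟩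
      · have h1 := Set.ncard_insert_le a1 ({a2} : Set V)
        have h2 : ({a2} : Set V).ncard = 1 := Set.ncard_singleton _
        omega
      · intro x hxR hxT y hyR hyT hadj
        have hx := hcornerI1 x hxR
        rcases boundary_edge hU1 hU2 hadj hx hyR with ⟨hef, -⟩ | ⟨hd, -⟩
        · rw [hpairEF] at hef
          rcases hef with hef | hef
          · rw [hg1eq] at hef
            rcases Sym2.eq_iff.mp hef with ⟨rfl, rfl⟩ | ⟨rfl, rfl⟩
            · exact hxT (Or.inl rfl)
            · exact hb1 hx
          · rw [hg2eq] at hef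
            rcases Sym2.eq_iff.mp hef with ⟨rfl, rfl⟩ | ⟨rfl, rfl⟩
            · exact hxT (Or.inr rfl)
            · exact hb2 hx
        · rw [hDga] at hd
          exact hd
      · rintro (rfl | rfl)
        · exact hu1.2 ha1.1.1
        · exact hu1.2 ha2.1.1
    · push_neg at hr
      have hunivsub : (Set.univ : Set V) ⊆ {a1, a2, u1, u2} := by
        rintro w -
        by_cases hw : w ∈ A ∩ C
        · rcases hr w (hcornerI1 w hw) with h | h
          · exact Or.inl h
          · exact Or.inr (Or.inl h)
        · rcases hout w hw with h | h
          · rw [hWzero] at h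
            exact h.elim
          · rw [← heOeq] at h
            rcases h with h | h
            · exact Or.inr (Or.inr (Or.inl h))
            · exact Or.inr (Or.inr (Or.inr h))
      have hVge := h3.1
      have ha1u1 : a1 ≠ u1 := fun h => hu1.2 (h ▸ ha1.1.1)
      have ha1u2 : a1 ≠ u2 := fun h => hu2.2 (h ▸ ha1.2.1)
      have ha2u1 : a2 ≠ u1 := fun h => hu1.2 (h ▸ ha2.1.1)
      have ha2u2 : a2 ≠ u2 := fun h => hu2.2 (h ▸ ha2.2.1)
      have hane : a1 ≠ a2 := by
        intro h
        have hsub : (Set.univ : Set V) ⊆ {a1, u1, u2} := by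
          rintro w hw
          rcases hunivsub hw with h' | h' | h' | h'
          · exact Or.inl h'
          · exact Or.inl (h ▸ h')
          · exact Or.inr (Or.inl h')
          · exact Or.inr (Or.inr h')
        have h1 : (Set.univ : Set V).ncard ≤ ({a1, u1, u2} : Set V).ncard :=
          Set.ncard_le_ncard hsub (Set.toFinite _)
        rw [Set.ncard_univ] at h1
        have h2 := Set.ncard_insert_le a1 ({u1, u2} : Set V)
        have h3' := Set.ncard_insert_le u1 ({u2} : Set V)
        have h4 : ({u2} : Set V).ncard = 1 := Set.ncard_singleton _
        omega
      have hcard4 : Nat.card V ≤ 4 := by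
        have h1 : (Set.univ : Set V).ncard ≤ ({a1, a2, u1, u2} : Set V).ncard :=
          Set.ncard_le_ncard hunivsub (Set.toFinite _)
        rw [Set.ncard_univ] at h1
        have h2 := Set.ncard_insert_le a1 ({a2, u1, u2} : Set V)
        have h3' := Set.ncard_insert_le a2 ({u1, u2} : Set V)
        have h4 := Set.ncard_insert_le u1 ({u2} : Set V)
        have h5 : ({u2} : Set V).ncard = 1 := Set.ncard_singleton _
        omega
      have hbedge : ∀ a' u' : V, a' ∈ (A \ B) ∩ (C \ D) → u' ∉ A ∩ C → a' ≠ u' →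
          s(a', u') ∈ (linkE G C D A B ∪ linkE G A B C D : Set (Sym2 V)) := by
        intro a' u' ha' hu' hne
        rcases boundary_edge hU1 hU2 (kconn_adj h3 hcard4 hne) ha' hu' with ⟨hef, -⟩ | ⟨hd, -⟩
        · exact hef
        · rw [hDga] at hd
          exact hd.elim
      have m1 := hbedge a1 u1 ha1 hu1nc ha1u1
      have m2 := hbedge a1 u2 ha1 hu2nc ha1u2
      have m3 := hbedge a2 u1 ha2 hu1nc ha2u1
      rw [hpairEF] at m1 m2 m3
      have d12 : s(a1, u1) ≠ s(a1, u2) := by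
        intro h
        rcases Sym2.eq_iff.mp h with ⟨-, h2⟩ | ⟨h1, -⟩
        · exact hu12 h2
        · exact ha1u2 h1
      have d13 : s(a1, u1) ≠ s(a2, u1) := by
        intro h
        rcases Sym2.eq_iff.mp h with ⟨h1, -⟩ | ⟨h1, -⟩
        · exact hane h1
        · exact ha1u1 h1
      have d23 : s(a1, u2) ≠ s(a2, u1) := by
        intro h
        rcases Sym2.eq_iff.mp h with ⟨h1, -⟩ | ⟨h1, -⟩
        · exact hane h1
        · exact ha1u1 h1
      rcases m1 with h1 | h1 <;> rcases m2 with h2 | h2 <;> rcases m3 with h3 | h3 <;>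
        first
        | exact d12 (h1.trans h2.symm)
        | exact d13 (h1.trans h3.symm)
        | exact d23 (h2.trans h3.symm)

end Case3

section Case2
set_option linter.unusedSectionVars false
set_option linter.unusedVariables false
set_option maxHeartbeats 1000000

variable {G : SimpleGraph V} {A B C D : Set V} {u v x y : V} {e : Sym2 V}

lemma eq_singleton_of_ncard_one {s : Set V} {a : V} (h : s.ncard = 1) (ha : a ∈ s) :
    s = {a} := by
  obtain ⟨b, rfl⟩ := Set.ncard_eq_one.mp h
  rw [ha]

/-- A link vertex `u ∈ (A∩B)\D` of a crossing pair with empty corner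
`(A\B)∩(C\D)` and small corner separator has a neighbour in `(A∩B)\C`. -/
lemma link_vertex_nbr (hAB : TriSep G A B)
    (hU1 : A ∪ B = Set.univ) (hU2 : C ∪ D = Set.univ)
    (hI1 : (A \ B) ∩ (C \ D) = ∅) (hu : u ∈ (A ∩ B) \ D)
    (hbound : ((C ∩ D) \ B).ncard + ((A ∩ B) \ D).ncard + (A ∩ B ∩ C ∩ D).ncard
      + (linkE G C D A B).ncard ≤ 2) :
    ∃ x, G.Adj u x ∧ x ∈ (A ∩ B) \ C := by
  have hdeg : 2 ≤ (G.neighborSet u ∩ A).ncard := (hAB.2 u hu.1).1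
  have huC : u ∈ C \ D := ⟨(mem_or_of_union hU2 u).resolve_right hu.2, hu.2⟩
  by_contra hno
  push_neg at hno
  -- the set of A-neighbours of u decomposes
  have hsub : G.neighborSet u ∩ A ⊆
      (((C ∩ D) \ B ∪ (A ∩ B) \ D ∪ (A ∩ B ∩ C ∩ D)) \ {u})
        ∪ endsIn (linkE G C D A B) ((A \ B) ∩ (D \ C)) := by
    rintro v ⟨hvN, hvA⟩
    have hadj : G.Adj u v := hvN
    have hvu : v ≠ u := fun h => G.irrefl (h ▸ hadj)
    rcases piece_cases hU1 hU2 v with hp | hp | hp | hp | hp | hp | hp | hp | hp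
    · rw [hI1] at hp
      exact hp.elim
    · -- v ∈ I₂ : the edge u-v is a link edge of A
      exact Or.inr ⟨hp, s(u, v), mem_EA hadj huC hp.2 (Or.inr hp.1) (Or.inl hu.1),
        Sym2.mem_mk_right u v⟩
    · exact Or.inl ⟨Or.inl (Or.inl hp), hvu⟩
    · exact absurd hvA hp.1.2
    · exact absurd hvA hp.1.2
    · exact absurd hvA hp.2
    · exact Or.inl ⟨Or.inl (Or.inr hp), hvu⟩
    · exact absurd hp (hno v hadj)
    · exact Or.inl ⟨Or.inr hp, hvu⟩
  have hWm : u ∈ ((C ∩ D) \ B ∪ (A ∩ B) \ D ∪ (A ∩ B ∩ C ∩ D) : Set V) :=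
    Or.inl (Or.inr hu)
  have h1 : (((C ∩ D) \ B ∪ (A ∩ B) \ D ∪ (A ∩ B ∩ C ∩ D) : Set V) \ {u}).ncard
      = ((C ∩ D) \ B ∪ (A ∩ B) \ D ∪ (A ∩ B ∩ C ∩ D) : Set V).ncard - 1 :=
    Set.ncard_diff_singleton_of_mem hWm
  have h2 : (endsIn (linkE G C D A B) ((A \ B) ∩ (D \ C))).ncard
      ≤ (linkE G C D A B).ncard := by
    apply ncard_le_of_unique_edge (fun v hv => hv.2)
    intro e he v hv hve w hw hwe
    obtain ⟨a, b, rfl, hadj, hcase⟩ := EA_struct hU1 he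
    have hb : a ∉ (A \ B) ∩ (D \ C) := by
      rcases hcase with ⟨ha, -⟩ | ⟨ha, -⟩ | ⟨ha, -⟩
      · rw [hI1] at ha; exact ha.elim
      · rw [hI1] at ha; exact ha.elim
      · exact fun h => h.1.2 ha.1.2
    have hv' : v = b := by
      rcases Sym2.mem_iff.mp hve with rfl | rfl
      · exact absurd hv.1 hb
      · rfl
    have hw' : w = b := by
      rcases Sym2.mem_iff.mp hwe with rfl | rfl
      · exact absurd hw.1 hb
      · rfl
    rw [hv', hw']
  have h3 := Set.ncard_union_le
    ((((C ∩ D) \ B ∪ (A ∩ B) \ D ∪ (A ∩ B ∩ C ∩ D)) \ {u} : Set V))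
    (endsIn (linkE G C D A B) ((A \ B) ∩ (D \ C)))
  have h4 := Set.ncard_le_ncard hsub (Set.toFinite _)
  have h5 := ncard_corner_W (A := A) (B := B) (C := C) (D := D) hU1 hU2
  have h6 : 1 ≤ ((A ∩ B) \ D).ncard := (Set.ncard_pos (Set.toFinite _)).mpr ⟨u, hu⟩
  have h7 : 1 ≤ ((C ∩ D) \ B ∪ (A ∩ B) \ D ∪ (A ∩ B ∩ C ∩ D) : Set V).ncard :=
    (Set.ncard_pos (Set.toFinite _)).mpr ⟨u, hWm⟩
  omega

end Case2

section Case2b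
set_option linter.unusedSectionVars false
set_option linter.unusedVariables false
set_option maxHeartbeats 1000000

variable {G : SimpleGraph V} {A B C D : Set V} {u v x y : V} {e : Sym2 V}

lemma corner_case2 (h3 : KConnected 3 G) (hK4 : ¬ Nonempty (G ≃g completeGraph (Fin 4)))
    (hAB : TriSep G A B) (hCD : TriSep G C D) (hCcyc : HasCycleIn G C)
    (hI1 : (A \ B) ∩ (C \ D) = ∅) (hu : u ∈ (A ∩ B) \ D)
    (hσ : (cornerSep G A B C D).ncard ≤ 2) : False := by
  have hU1 : A ∪ B = Set.univ := hAB.1.1.1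
  have hU2 : C ∪ D = Set.univ := hCD.1.1.1
  have hABne : (A \ B).Nonempty := hAB.1.1.2.1
  have hordAB := hAB.1.2
  have hordCD := hCD.1.2
  have hnums := corner_numbers hU1 hU2 hσ
  have hWsplit := ncard_corner_W (A := A) (B := B) (C := C) (D := D) hU1 hU2
  have hEAle : (linkE G C D A B).ncard
      ≤ (linkE G C D A B ∪ linkE G A B C D : Set (Sym2 V)).ncard :=
    Set.ncard_le_ncard Set.subset_union_left (Set.toFinite _)
  have hECle : (linkE G A B C D).ncard
      ≤ (linkE G C D A B ∪ linkE G A B C D : Set (Sym2 V)).ncard :=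
    Set.ncard_le_ncard Set.subset_union_right (Set.toFinite _)
  have hboundA : ((C ∩ D) \ B).ncard + ((A ∩ B) \ D).ncard + (A ∩ B ∩ C ∩ D).ncard
      + (linkE G C D A B).ncard ≤ 2 := by omega
  obtain ⟨x, hadjux, hxQ⟩ := link_vertex_nbr hAB hU1 hU2 hI1 hu hboundA
  have huC : u ∈ C \ D := ⟨(mem_or_of_union hU2 u).resolve_right hu.2, hu.2⟩
  have hxDC : x ∈ D \ C := ⟨(mem_or_of_union hU2 x).resolve_left hxQ.2, hxQ.2⟩
  have hsux : s(u, x) ∈ sepEdges G C D := mem_sepEdges_of hadjux huC hxDC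
  have heCD1 : 1 ≤ (sepEdges G C D).ncard :=
    (Set.ncard_pos (Set.toFinite _)).mpr ⟨_, hsux⟩
  have hBAB : ((A ∩ B) \ D).ncard + ((A ∩ B) \ C).ncard + (A ∩ B ∩ C ∩ D).ncard
      + (sepEdges G A B).ncard = 3 := by
    have h1 := sepOrder_eq_add G A B
    have h2 := ncard_inter_split hU2 A B
    omega
  have hBCD : ((C ∩ D) \ B).ncard + ((C ∩ D) \ A).ncard + (A ∩ B ∩ C ∩ D).ncard
      + (sepEdges G C D).ncard = 3 := by
    have h1 := sepOrder_eq_add G C D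
    have h2 := ncard_inter_split hU1 C D
    rw [inter₄_comm A B C D] at h2
    omega
  have hp1 : 1 ≤ ((A ∩ B) \ D).ncard := (Set.ncard_pos (Set.toFinite _)).mpr ⟨u, hu⟩
  have hq1 : 1 ≤ ((A ∩ B) \ C).ncard := (Set.ncard_pos (Set.toFinite _)).mpr ⟨x, hxQ⟩
  by_cases hP' : ((C ∩ D) \ B).Nonempty
  · -- Case 2a
    obtain ⟨w, hw⟩ := hP'
    have hboundC : ((A ∩ B) \ D).ncard + ((C ∩ D) \ B).ncard + (C ∩ D ∩ A ∩ B).ncard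
        + (linkE G A B C D).ncard ≤ 2 := by
      rw [inter₄_comm A B C D]
      omega
    obtain ⟨y, hadjwy, hyQ'⟩ := link_vertex_nbr (A := C) (B := D) (C := A) (D := B)
      hCD hU2 hU1 (by rw [Set.inter_comm]; exact hI1) hw hboundC
    have hwAB : w ∈ A \ B := ⟨(mem_or_of_union hU1 w).resolve_right hw.2, hw.2⟩
    have hyBA : y ∈ B \ A := ⟨(mem_or_of_union hU1 y).resolve_left hyQ'.2, hyQ'.2⟩
    have hswy : s(w, y) ∈ sepEdges G A B := mem_sepEdges_of hadjwy hwAB hyBA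
    have heAB1 : 1 ≤ (sepEdges G A B).ncard :=
      (Set.ncard_pos (Set.toFinite _)).mpr ⟨_, hswy⟩
    have hp'1 : 1 ≤ ((C ∩ D) \ B).ncard := (Set.ncard_pos (Set.toFinite _)).mpr ⟨w, hw⟩
    have hq'1 : 1 ≤ ((C ∩ D) \ A).ncard := (Set.ncard_pos (Set.toFinite _)).mpr ⟨y, hyQ'⟩
    have hPu : (A ∩ B) \ D = {u} := eq_singleton_of_ncard_one (by omega) hu
    have hQx : (A ∩ B) \ C = {x} := eq_singleton_of_ncard_one (by omega) hxQ
    have hP'w : (C ∩ D) \ B = {w} := eq_singleton_of_ncard_one (by omega) hw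
    have hQ'y : (C ∩ D) \ A = {y} := eq_singleton_of_ncard_one (by omega) hyQ'
    have hZe : A ∩ B ∩ C ∩ D = ∅ :=
      (Set.ncard_eq_zero (Set.toFinite _)).mp (by omega)
    have hsepAB : sepEdges G A B = {s(w, y)} := eq_singleton_of_ncard_one (by omega) hswy
    have hsepCD : sepEdges G C D = {s(u, x)} := eq_singleton_of_ncard_one (by omega) hsux
    by_cases hI2 : ((A \ B) ∩ (D \ C)).Nonempty
    · obtain ⟨a0, ha0⟩ := hI2
      refine cut_lemma h3 (R := A \ B) (T := {w, x}) ?_ ?_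
        ⟨a0, ha0.1, ?_⟩ ⟨u, fun h => h.2 hu.1.2, ?_⟩
      · have h1 := Set.ncard_insert_le w ({x} : Set V)
        have h2 : ({x} : Set V).ncard = 1 := Set.ncard_singleton _
        omega
      · intro x' hx'R hx'T y' hy'R hy'T hadj'
        have hx'I2 : x' ∈ (A \ B) ∩ (D \ C) := by
          rcases piece_cases hU1 hU2 x' with hp | hp | hp | hp | hp | hp | hp | hp | hp
          · rw [hI1] at hp; exact hp.elim
          · exact hp
          · rw [hP'w] at hp; exact absurd (Or.inl hp) hx'T
          · exact absurd hp.1.1 hx'R.2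
          · exact absurd hp.1.1 hx'R.2
          · exact absurd hx'R.1 hp.2
          · exact absurd hp.1.2 hx'R.2
          · exact absurd hp.1.2 hx'R.2
          · exact absurd hp.1.1.2 hx'R.2
        have hBAedge : y' ∈ B \ A → False := by
          intro hy'BA
          have : s(x', y') ∈ sepEdges G A B := mem_sepEdges_of hadj' hx'R hy'BA
          rw [hsepAB] at this
          rcases Sym2.eq_iff.mp this with ⟨rfl, rfl⟩ | ⟨rfl, rfl⟩
          · exact hx'T (Or.inl rfl)
          · exact hyBA.2 hx'R.1
        rcases piece_cases hU1 hU2 y' with hp | hp | hp | hp | hp | hp | hp | hp | hp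
        · rw [hI1] at hp; exact hp.elim
        · exact hy'R hp.1
        · rw [hP'w] at hp; exact hy'T (Or.inl hp)
        · exact hBAedge hp.1
        · exact hBAedge hp.1
        · exact hBAedge ⟨(mem_or_of_union hU1 y').resolve_left hp.2, hp.2⟩
        · -- y' ∈ P = {u}
          rw [hPu] at hp
          rcases hp with rfl
          have : s(y', x') ∈ sepEdges G C D :=
            mem_sepEdges_of hadj'.symm huC hx'I2.2
          rw [hsepCD] at this
          rcases Sym2.eq_iff.mp this with ⟨-, rfl⟩ | ⟨rfl, -⟩
          · exact hx'I2.1.2 hxQ.1.2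
          · exact hxDC.2 huC.1
        · rw [hQx] at hp; exact hy'T (Or.inr hp)
        · rw [hZe] at hp; exact hp.elim
      · rintro (rfl | rfl)
        · exact ha0.2.2 hw.1.1
        · exact ha0.1.2 hxQ.1.2
      · rintro (rfl | rfl)
        · exact hwAB.2 hu.1.2
        · exact hxQ.2 huC.1
    · -- I₂ empty
      have hI2e : (A \ B) ∩ (D \ C) = ∅ := Set.not_nonempty_iff_eq_empty.mp hI2
      have hABw : A \ B = {w} := by
        apply subset_antisymm
        · intro t ht
          rcases piece_cases hU1 hU2 t with hp | hp | hp | hp | hp | hp | hp | hp | hp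
          · rw [hI1] at hp; exact hp.elim
          · rw [hI2e] at hp; exact hp.elim
          · rw [hP'w] at hp; exact hp
          · exact absurd hp.1.1 ht.2
          · exact absurd hp.1.1 ht.2
          · exact absurd ht.1 hp.2
          · exact absurd hp.1.2 ht.2
          · exact absurd hp.1.2 ht.2
          · exact absurd hp.1.1.2 ht.2
        · rintro t rfl
          exact hwAB
      by_cases hI3 : ((B \ A) ∩ (C \ D)).Nonempty
      · obtain ⟨c0, hc0⟩ := hI3
        refine cut_lemma h3 (R := (B \ A) ∩ (C \ D)) (T := {u, y}) ?_ ?_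
          ⟨c0, hc0, ?_⟩ ⟨x, fun h => h.1.2 hxQ.1.1, ?_⟩
        · have h1 := Set.ncard_insert_le u ({y} : Set V)
          have h2 : ({y} : Set V).ncard = 1 := Set.ncard_singleton _
          omega
        · intro x' hx'R hx'T y' hy'R hy'T hadj'
          have hDCedge : y' ∈ D \ C → False := by
            intro hy'DC
            have : s(x', y') ∈ sepEdges G C D := mem_sepEdges_of hadj' hx'R.2 hy'DC
            rw [hsepCD] at this
            rcases Sym2.eq_iff.mp this with ⟨rfl, rfl⟩ | ⟨rfl, rfl⟩
            · exact hx'R.1.2 hu.1.1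
            · exact hx'R.1.2 hxQ.1.1
          rcases piece_cases hU1 hU2 y' with hp | hp | hp | hp | hp | hp | hp | hp | hp
          · rw [hI1] at hp; exact hp.elim
          · rw [hI2e] at hp; exact hp.elim
          · -- y' ∈ P' = {w}
            rw [hP'w] at hp
            rcases hp with rfl
            have : s(y', x') ∈ sepEdges G A B :=
              mem_sepEdges_of hadj'.symm hwAB hx'R.1
            rw [hsepAB] at this
            rcases Sym2.eq_iff.mp this with ⟨-, rfl⟩ | ⟨rfl, -⟩
            · exact hx'T (Or.inr rfl)
            · exact hyBA.2 hwAB.1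
          · exact hy'R hp
          · exact hDCedge hp.2
          · rw [hQ'y] at hp; exact hy'T (Or.inr hp)
          · rw [hPu] at hp; exact hy'T (Or.inl hp)
          · exact hDCedge ⟨(mem_or_of_union hU2 y').resolve_left hp.2, hp.2⟩
          · rw [hZe] at hp; exact hp.elim
        · rintro (rfl | rfl)
          · exact hc0.1.2 hu.1.1
          · exact hc0.2.2 hyQ'.1.2
        · rintro (rfl | rfl)
          · exact hxQ.2 huC.1
          · exact hyQ'.2 hxQ.1.1
      · have hI3e : (B \ A) ∩ (C \ D) = ∅ := Set.not_nonempty_iff_eq_empty.mp hI3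
        by_cases hI4 : ((B \ A) ∩ (D \ C)).Nonempty
        · obtain ⟨d0, hd0⟩ := hI4
          refine cut_lemma h3 (R := (B \ A) ∩ (D \ C)) (T := {x, y}) ?_ ?_
            ⟨d0, hd0, ?_⟩ ⟨u, fun h => h.1.2 hu.1.1, ?_⟩
          · have h1 := Set.ncard_insert_le x ({y} : Set V)
            have h2 : ({y} : Set V).ncard = 1 := Set.ncard_singleton _
            omega
          · intro x' hx'R hx'T y' hy'R hy'T hadj'
            rcases piece_cases hU1 hU2 y' with hp | hp | hp | hp | hp | hp | hp | hp | hp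
            · rw [hI1] at hp; exact hp.elim
            · rw [hI2e] at hp; exact hp.elim
            · -- y' ∈ P' = {w}
              rw [hP'w] at hp
              rcases hp with rfl
              have : s(y', x') ∈ sepEdges G A B :=
                mem_sepEdges_of hadj'.symm hwAB hx'R.1
              rw [hsepAB] at this
              rcases Sym2.eq_iff.mp this with ⟨-, rfl⟩ | ⟨rfl, -⟩
              · exact hx'T (Or.inr rfl)
              · exact hyBA.2 hwAB.1
            · rw [hI3e] at hp; exact hp.elim
            · exact hy'R hp
            · rw [hQ'y] at hp; exact hy'T (Or.inr hp)
            · -- y' ∈ P = {u}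
              rw [hPu] at hp
              rcases hp with rfl
              have : s(y', x') ∈ sepEdges G C D :=
                mem_sepEdges_of hadj'.symm huC hx'R.2
              rw [hsepCD] at this
              rcases Sym2.eq_iff.mp this with ⟨-, rfl⟩ | ⟨rfl, -⟩
              · exact hx'T (Or.inl rfl)
              · exact hxDC.2 huC.1
            · rw [hQx] at hp; exact hy'T (Or.inl hp)
            · rw [hZe] at hp; exact hp.elim
          · rintro (rfl | rfl)
            · exact hd0.1.2 hxQ.1.1
            · exact hd0.2.2 hyQ'.1.1
          · rintro (rfl | rfl)
            · exact hxQ.2 huC.1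
            · exact hyQ'.2 hu.1.1
        · -- all four interiors empty : V = {u,w,x,y}, so G ≅ K₄
          have hI4e : (B \ A) ∩ (D \ C) = ∅ := Set.not_nonempty_iff_eq_empty.mp hI4
          have hunivsub : (Set.univ : Set V) ⊆ {u, w, x, y} := by
            rintro t -
            rcases piece_cases hU1 hU2 t with hp | hp | hp | hp | hp | hp | hp | hp | hp
            · rw [hI1] at hp; exact hp.elim
            · rw [hI2e] at hp; exact hp.elim
            · rw [hP'w] at hp; exact Or.inr (Or.inl hp)
            · rw [hI3e] at hp; exact hp.elim
            · rw [hI4e] at hp; exact hp.elim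
            · rw [hQ'y] at hp; exact Or.inr (Or.inr (Or.inr hp))
            · rw [hPu] at hp; exact Or.inl hp
            · rw [hQx] at hp; exact Or.inr (Or.inr (Or.inl hp))
            · rw [hZe] at hp; exact hp.elim
          have hVge := h3.1
          have hcard4 : Nat.card V = 4 := by
            have h1 : (Set.univ : Set V).ncard ≤ ({u, w, x, y} : Set V).ncard :=
              Set.ncard_le_ncard hunivsub (Set.toFinite _)
            rw [Set.ncard_univ] at h1
            have h2 := Set.ncard_insert_le u ({w, x, y} : Set V)
            have h3' := Set.ncard_insert_le w ({x, y} : Set V)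
            have h4 := Set.ncard_insert_le x ({y} : Set V)
            have h5 : ({y} : Set V).ncard = 1 := Set.ncard_singleton _
            omega
          exact hK4 (kconn_K4 h3 hcard4)
  · -- Case 2b : P' is empty
    have hP'e : (C ∩ D) \ B = ∅ := Set.not_nonempty_iff_eq_empty.mp hP'
    have hABsub : A \ B ⊆ (A \ B) ∩ (D \ C) := by
      intro t ht
      rcases piece_cases hU1 hU2 t with hp | hp | hp | hp | hp | hp | hp | hp | hp
      · rw [hI1] at hp; exact hp.elim
      · exact hp
      · rw [hP'e] at hp; exact hp.elim
      · exact absurd hp.1.1 ht.2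
      · exact absurd hp.1.1 ht.2
      · exact absurd ht.1 hp.2
      · exact absurd hp.1.2 ht.2
      · exact absurd hp.1.2 ht.2
      · exact absurd hp.1.1.2 ht.2
    by_cases hEA : linkE G C D A B = ∅
    · -- 2b-α : no corner edges at all
      refine cut_lemma h3 (R := A \ B)
        (T := ((A ∩ B) \ C) ∪ (A ∩ B ∩ C ∩ D) ∪ endsIn (sepEdges G A B) (B \ A))
        ?_ ?_ ?_ ⟨u, fun h => h.2 hu.1.2, ?_⟩
      · have h1 : (endsIn (sepEdges G A B) (B \ A)).ncard ≤ (sepEdges G A B).ncard := by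
          apply ncard_le_of_unique_edge (fun v hv => hv.2)
          intro e he v hv hve w hw hwe
          obtain ⟨-, a, haAB, b, hbBA, rfl⟩ := he
          have hv' : v = b := by
            rcases Sym2.mem_iff.mp hve with h | h
            · exact absurd haAB.1 ((h ▸ hv.1).2)
            · exact h
          have hw' : w = b := by
            rcases Sym2.mem_iff.mp hwe with h | h
            · exact absurd haAB.1 ((h ▸ hw.1).2)
            · exact h
          rw [hv', hw']
        have h2 := Set.ncard_union_le (((A ∩ B) \ C) ∪ (A ∩ B ∩ C ∩ D) : Set V)
          (endsIn (sepEdges G A B) (B \ A))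
        have h3' := Set.ncard_union_le ((A ∩ B) \ C) ((A ∩ B ∩ C ∩ D) : Set V)
        omega
      · intro x' hx'R hx'T y' hy'R hy'T hadj'
        have hx'I2 : x' ∈ (A \ B) ∩ (D \ C) := hABsub hx'R
        have hBAedge : y' ∈ B \ A → False := fun hy'BA => hy'T (Or.inr
          ⟨hy'BA, s(x', y'), mem_sepEdges_of hadj' hx'R hy'BA, Sym2.mem_mk_right _ _⟩)
        rcases piece_cases hU1 hU2 y' with hp | hp | hp | hp | hp | hp | hp | hp | hp
        · rw [hI1] at hp; exact hp.elim
        · exact hy'R hp.1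
        · rw [hP'e] at hp; exact hp.elim
        · exact hBAedge hp.1
        · exact hBAedge hp.1
        · exact hBAedge ⟨(mem_or_of_union hU1 y').resolve_left hp.2, hp.2⟩
        · -- y' ∈ P : the edge is a link edge of A, but there are none
          have hy'C : y' ∈ C \ D := ⟨(mem_or_of_union hU2 y').resolve_right hp.2, hp.2⟩
          have : s(y', x') ∈ linkE G C D A B :=
            mem_EA hadj'.symm hy'C hx'I2.2 (Or.inr hx'I2.1) (Or.inl hp.1)
          rw [hEA] at this
          exact this
        · exact hy'T (Or.inl (Or.inl hp))
        · exact hy'T (Or.inl (Or.inr hp))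
      · obtain ⟨a0, ha0⟩ := hABne
        refine ⟨a0, ha0, ?_⟩
        intro hmem
        rcases hmem with (h | h) | h
        · exact ha0.2 h.1.2
        · exact ha0.2 h.1.1.2
        · exact h.1.2 ha0.1
      · intro hmem
        rcases hmem with (h | h) | h
        · exact h.2 huC.1
        · exact hu.2 h.2
        · exact h.1.2 hu.1.1
    · -- 2b-β : there is a corner edge g = s(u, gb)
      obtain ⟨g, hg⟩ := Set.nonempty_iff_ne_empty.mpr hEA
      obtain ⟨ga, gb, hgeq, hgadj, hgcase⟩ := EA_struct hU1 hg
      have hgagb : ga ∈ (A ∩ B) \ D ∧ gb ∈ (A \ B) ∩ (D \ C) := by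
        rcases hgcase with ⟨ha, hb⟩ | ⟨ha, hb⟩ | ⟨ha, hb⟩
        · rw [hI1] at ha; exact ha.elim
        · rw [hI1] at ha; exact ha.elim
        · exact ⟨ha, hb⟩
      have hEA1 : 1 ≤ (linkE G C D A B).ncard :=
        (Set.ncard_pos (Set.toFinite _)).mpr ⟨g, hg⟩
      have hp'0 : ((C ∩ D) \ B).ncard = 0 := by rw [hP'e]; exact Set.ncard_empty _
      have hpe : ((A ∩ B) \ D).ncard = 1 := by omega
      have hze : (A ∩ B ∩ C ∩ D).ncard = 0 := by omega
      have hZe : A ∩ B ∩ C ∩ D = ∅ := (Set.ncard_eq_zero (Set.toFinite _)).mp hze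
      have hPu : (A ∩ B) \ D = {u} := eq_singleton_of_ncard_one hpe hu
      have hgau : ga = u := by
        have h := hgagb.1
        rw [hPu] at h
        exact h
      have hsugb : s(u, gb) ∈ sepEdges G C D := by
        have h := hg.1
        rw [hgeq, hgau] at h
        exact h
      have hadjugb : G.Adj u gb := by
        rw [hgau] at hgadj
        exact hgadj
      have hxgb : x ≠ gb := fun h => hgagb.2.1.2 (h ▸ hxQ.1.2)
      have hsne : s(u, x) ≠ s(u, gb) := by
        intro h
        rcases Sym2.eq_iff.mp h with ⟨-, h2⟩ | ⟨h1, -⟩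
        · exact hxgb h2
        · exact hgagb.2.1.2 (h1 ▸ hu.1.2)
      have hpairsub : ({s(u, x), s(u, gb)} : Set (Sym2 V)) ⊆ sepEdges G C D := by
        rintro t (rfl | rfl)
        · exact hsux
        · exact hsugb
      have hpaircard : ({s(u, x), s(u, gb)} : Set (Sym2 V)).ncard = 2 :=
        Set.ncard_pair hsne
      have heCD2 : 2 ≤ (sepEdges G C D).ncard := by
        rw [← hpaircard]
        exact Set.ncard_le_ncard hpairsub (Set.toFinite _)
      by_cases hI3 : ((B \ A) ∩ (C \ D)).Nonempty
      · obtain ⟨c0, hc0⟩ := hI3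
        have hExtle : (endsIn (sepEdges G C D \ {s(u, x), s(u, gb)}) (D \ C)).ncard
            ≤ (sepEdges G C D).ncard - 2 := by
          have h1 : (endsIn (sepEdges G C D \ {s(u, x), s(u, gb)}) (D \ C)).ncard
              ≤ (sepEdges G C D \ ({s(u, x), s(u, gb)} : Set (Sym2 V))).ncard := by
            apply ncard_le_of_unique_edge (fun v hv => hv.2)
            intro e he v hv hve w hw hwe
            obtain ⟨-, a, haCD, b, hbDC, rfl⟩ := he.1
            have hv' : v = b := by
              rcases Sym2.mem_iff.mp hve with h | h
              · exact absurd haCD.1 ((h ▸ hv.1).2)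
              · exact h
            have hw' : w = b := by
              rcases Sym2.mem_iff.mp hwe with h | h
              · exact absurd haCD.1 ((h ▸ hw.1).2)
              · exact h
            rw [hv', hw']
          have h2 : (sepEdges G C D \ ({s(u, x), s(u, gb)} : Set (Sym2 V))).ncard
              = (sepEdges G C D).ncard - 2 := by
            rw [Set.ncard_diff hpairsub, hpaircard]
          omega
        refine cut_lemma h3 (R := (B \ A) ∩ (C \ D))
          (T := ({u} : Set V) ∪ ((C ∩ D) \ A)
            ∪ endsIn (sepEdges G C D \ {s(u, x), s(u, gb)}) (D \ C))
          ?_ ?_ ⟨c0, hc0, ?_⟩ ?_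
        · have h2 := Set.ncard_union_le (({u} : Set V) ∪ ((C ∩ D) \ A))
            (endsIn (sepEdges G C D \ {s(u, x), s(u, gb)}) (D \ C))
          have h3' := Set.ncard_union_le ({u} : Set V) ((C ∩ D) \ A)
          have h4 : ({u} : Set V).ncard = 1 := Set.ncard_singleton _
          omega
        · intro x' hx'R hx'T y' hy'R hy'T hadj'
          have hDCedge : y' ∈ D \ C → False := by
            intro hy'DC
            have hm : s(x', y') ∈ sepEdges G C D := mem_sepEdges_of hadj' hx'R.2 hy'DC
            have hnp : s(x', y') ∉ ({s(u, x), s(u, gb)} : Set (Sym2 V)) := by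
              rintro (h | h) <;> rcases Sym2.eq_iff.mp h with ⟨h1, -⟩ | ⟨h1, -⟩
              · exact hx'R.1.2 (h1 ▸ hu.1.1)
              · exact hx'R.1.2 (h1 ▸ hxQ.1.1)
              · exact hx'R.1.2 (h1 ▸ hu.1.1)
              · exact hx'R.1.2 (h1 ▸ hgagb.2.1.1)
            exact hy'T (Or.inr ⟨hy'DC, s(x', y'), ⟨hm, hnp⟩, Sym2.mem_mk_right _ _⟩)
          rcases piece_cases hU1 hU2 y' with hp | hp | hp | hp | hp | hp | hp | hp | hp
          · rw [hI1] at hp; exact hp.elim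
          · exact hDCedge hp.2
          · rw [hP'e] at hp; exact hp.elim
          · exact hy'R hp
          · exact hDCedge hp.2
          · exact hy'T (Or.inl (Or.inr hp))
          · rw [hPu] at hp
            exact hy'T (Or.inl (Or.inl hp))
          · exact hDCedge ⟨(mem_or_of_union hU2 y').resolve_left hp.2, hp.2⟩
          · rw [hZe] at hp; exact hp.elim
        · intro hmem
          rcases hmem with (h | h) | h
          · exact hc0.1.2 (h ▸ hu.1.1)
          · exact hc0.2.2 h.1.2
          · exact h.1.2 hc0.2.1
        · by_cases hxExt : x ∈ endsIn (sepEdges G C D \ {s(u, x), s(u, gb)}) (D \ C)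
          · refine ⟨gb, fun h => h.1.2 hgagb.2.1.1, ?_⟩
            intro hmem
            rcases hmem with (h | h) | h
            · exact hgagb.2.1.2 (by rw [show gb = u from h]; exact hu.1.2)
            · exact h.2 hgagb.2.1.1
            · -- both x and gb in Ext : too many extra edges
              have hsub2 : ({x, gb} : Set V) ⊆
                  endsIn (sepEdges G C D \ {s(u, x), s(u, gb)}) (D \ C) := by
                rintro t (rfl | rfl)
                · exact hxExt
                · exact h
              have h2le : 2 ≤ (endsIn (sepEdges G C D \ {s(u, x), s(u, gb)}) (D \ C)).ncard := by
                rw [← Set.ncard_pair hxgb]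
                exact Set.ncard_le_ncard hsub2 (Set.toFinite _)
              omega
          · refine ⟨x, fun h => h.1.2 hxQ.1.1, ?_⟩
            intro hmem
            rcases hmem with (h | h) | h
            · exact hxQ.2 (h ▸ huC.1)
            · exact h.2 hxQ.1.1
            · exact hxExt h
      · -- I₃ empty : C is too small to contain a cycle
        have hI3e : (B \ A) ∩ (C \ D) = ∅ := Set.not_nonempty_iff_eq_empty.mp hI3
        have hCsub : C ⊆ insert u ((C ∩ D) \ A) := by
          intro t htC
          rcases piece_cases hU1 hU2 t with hp | hp | hp | hp | hp | hp | hp | hp | hp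
          · rw [hI1] at hp; exact hp.elim
          · exact absurd htC hp.2.2
          · rw [hP'e] at hp; exact hp.elim
          · rw [hI3e] at hp; exact hp.elim
          · exact absurd htC hp.2.2
          · exact Or.inr hp
          · rw [hPu] at hp
            exact Or.inl hp
          · exact absurd htC hp.2
          · rw [hZe] at hp; exact hp.elim
        have h3le := three_le_of_hasCycleIn hCcyc
        have h1 : C.ncard ≤ ((C ∩ D) \ A).ncard + 1 :=
          le_trans (Set.ncard_le_ncard hCsub (Set.toFinite _)) (Set.ncard_insert_le _ _)
        omega

end Case2b

section Glue
set_option linter.unusedSectionVars false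
set_option linter.unusedVariables false
set_option maxHeartbeats 1000000

variable {G : SimpleGraph V} {A B C D : Set V} {u v x y : V} {e : Sym2 V}

lemma corner_ge (h3 : KConnected 3 G) (hK4 : ¬ Nonempty (G ≃g completeGraph (Fin 4)))
    (hAB : TriSep G A B) (hCD : TriSep G C D)
    (hABnt : NontrivialSep G A B) (hCDnt : NontrivialSep G C D)
    (hcross : ¬ Nested A B C D) :
    3 ≤ (cornerSep G A B C D).ncard := by
  by_contra hlt
  push_neg at hlt
  have hσ : (cornerSep G A B C D).ncard ≤ 2 := by omega
  have hU1 : A ∪ B = Set.univ := hAB.1.1.1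
  have hU2 : C ∪ D = Set.univ := hCD.1.1.1
  by_cases hI1 : ((A \ B) ∩ (C \ D)).Nonempty
  · by_cases hI4 : ((B \ A) ∩ (D \ C)).Nonempty
    · exact corner_case1 h3 hU1 hU2 hI1 hI4 hσ
    · exact corner_case3 h3 hU1 hU2 hAB.1.1.2.2 hCD.1.1.2.2 hI1
        (Set.not_nonempty_iff_eq_empty.mp hI4) hσ
  · have hI1e : (A \ B) ∩ (C \ D) = ∅ := Set.not_nonempty_iff_eq_empty.mp hI1
    have h2 : ¬(A ⊆ D ∧ C ⊆ B) := fun h => hcross (Or.inr (Or.inl h))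
    rw [not_and_or] at h2
    rcases h2 with h2 | h2
    · rw [Set.not_subset] at h2
      obtain ⟨a, haA, haD⟩ := h2
      have haB : a ∈ B := by
        by_contra haB
        have : a ∈ (A \ B) ∩ (C \ D) :=
          ⟨⟨haA, haB⟩, (mem_or_of_union hU2 a).resolve_right haD, haD⟩
        rw [hI1e] at this
        exact this
      exact corner_case2 h3 hK4 hAB hCD hCDnt.1 hI1e ⟨⟨haA, haB⟩, haD⟩ hσ
    · rw [Set.not_subset] at h2
      obtain ⟨c, hcC, hcB⟩ := h2
      have hcD : c ∈ D := by
        by_contra hcD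
        have : c ∈ (A \ B) ∩ (C \ D) :=
          ⟨⟨(mem_or_of_union hU1 c).resolve_right hcB, hcB⟩, hcC, hcD⟩
        rw [hI1e] at this
        exact this
      have hσ' : (cornerSep G C D A B).ncard ≤ 2 := by
        rw [cornerSep_symm]
        exact hσ
      exact corner_case2 h3 hK4 hCD hAB hABnt.1
        (by rw [Set.inter_comm]; exact hI1e) ⟨⟨hcC, hcD⟩, hcB⟩ hσ'

end Glue

section Final
set_option linter.unusedSectionVars false
set_option linter.unusedVariables false
set_option maxHeartbeats 2000000

variable {G : SimpleGraph V} {A B C D : Set V} {u v x y : V} {e : Sym2 V}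

lemma inter₄_perm₂ (A B C D : Set V) : B ∩ A ∩ D ∩ C = A ∩ B ∩ C ∩ D := by
  ext v; simp only [Set.mem_inter_iff]; tauto

lemma inter₄_perm₃ (A B C D : Set V) : A ∩ B ∩ D ∩ C = A ∩ B ∩ C ∩ D := by
  ext v; simp only [Set.mem_inter_iff]; tauto

lemma inter₄_perm₄ (A B C D : Set V) : B ∩ A ∩ C ∩ D = A ∩ B ∩ C ∩ D := by
  ext v; simp only [Set.mem_inter_iff]; tauto

lemma sep_decomp_subset (G : SimpleGraph V) (A B C D : Set V) :
    linkE G A B C D ∪ linkE G A B D C ∪ diagEdges G A B C D ⊆ sepEdges G A B := by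
  rintro e ((h | h) | h)
  · exact h.1
  · exact h.1
  · exact diag_subset_sepEdges G A B C D h

lemma sep_decomp_ncard (hU1 : A ∪ B = Set.univ) (hU2 : C ∪ D = Set.univ) :
    (linkE G A B C D ∪ linkE G A B D C ∪ diagEdges G A B C D : Set (Sym2 V)).ncard
      = (linkE G A B C D).ncard + (linkE G A B D C).ncard
        + (diagEdges G A B C D).ncard := by
  rw [Set.ncard_union_eq, Set.ncard_union_eq (linkE_disjoint G A B C D)]
  rw [Set.disjoint_left]
  rintro e (h | h) h'
  · exact h.2.1 h'
  · rw [← diag_symm₂ G A B C D] at h'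
    exact h.2.1 h'

/-- Crossing Lemma: If two nontrivial tri-separations of a
3-connected graph other than `K₄` cross, then exactly one of: (1) all links
have size one and the centre is a single vertex; (2) all links are empty and
the centre consists of three vertices. There are no jumping edges, and if
`(A,B)` is half-connected then (1) holds. -/
theorem stmt7 (G : SimpleGraph V) (h3 : KConnected 3 G)
    (hK4 : ¬ Nonempty (G ≃g completeGraph (Fin 4)))
    (A B C D : Set V) (hAB : TriSep G A B) (hCD : TriSep G C D)
    (hABnt : NontrivialSep G A B) (hCDnt : NontrivialSep G C D)
    (hcross : ¬ Nested A B C D) :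
    Xor'
        ((link G C D A B).ncard = 1 ∧ (link G C D B A).ncard = 1 ∧
          (link G A B C D).ncard = 1 ∧ (link G A B D C).ncard = 1 ∧
          (A ∩ B ∩ C ∩ D).ncard = 1 ∧ diagEdges G A B C D = ∅)
        (link G C D A B = ∅ ∧ link G C D B A = ∅ ∧
          link G A B C D = ∅ ∧ link G A B D C = ∅ ∧
          (A ∩ B ∩ C ∩ D).ncard = 3 ∧ diagEdges G A B C D = ∅) ∧
      jumpEdges G A B C D = ∅ ∧
      (((G.induce (A \ B)).Connected ∨ (G.induce (B \ A)).Connected) →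
        ((link G C D A B).ncard = 1 ∧ (link G C D B A).ncard = 1 ∧
          (link G A B C D).ncard = 1 ∧ (link G A B D C).ncard = 1 ∧
          (A ∩ B ∩ C ∩ D).ncard = 1 ∧ diagEdges G A B C D = ∅)) := by
  have hU1 : A ∪ B = Set.univ := hAB.1.1.1
  have hU2 : C ∪ D = Set.univ := hCD.1.1.1
  have hordAB := hAB.1.2
  have hordCD := hCD.1.2
  -- symmetric hypothesis variants
  have hAB' := triSep_symm hAB
  have hCD' := triSep_symm hCD
  have hABnt' := nontrivialSep_symm hABnt
  have hCDnt' := nontrivialSep_symm hCDnt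
  have hcross2 : ¬ Nested A B D C := fun h => hcross (nested_symm₂.mp h)
  have hcross3 : ¬ Nested B A C D := fun h => hcross (nested_symm₁.mp h)
  have hcross4 : ¬ Nested B A D C := fun h => hcross (nested_symm₁.mp (nested_symm₂.mp h))
  -- lower bounds on the four corner separators
  have hc1 := corner_ge h3 hK4 hAB hCD hABnt hCDnt hcross
  have hc2 := corner_ge h3 hK4 hAB' hCD' hABnt' hCDnt' hcross4
  have hc3 := corner_ge h3 hK4 hAB hCD' hABnt hCDnt' hcross2
  have hc4 := corner_ge h3 hK4 hAB' hCD hABnt' hCDnt hcross3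
  -- upper bounds
  have hu1 := cornerSep_ncard_le G A B C D
  have hu2 := cornerSep_ncard_le G B A D C
  have hu3 := cornerSep_ncard_le G A B D C
  have hu4 := cornerSep_ncard_le G B A C D
  have hrfl1 : {e ∈ diagEdges G A B C D | ∃ x ∈ e, x ∈ (A \ B) ∩ (C \ D)}
      = Dga G A B C D := rfl
  have hrfl3 : {e ∈ diagEdges G A B D C | ∃ x ∈ e, x ∈ (A \ B) ∩ (D \ C)}
      = Dga G A B D C := rfl
  rw [hrfl1] at hu1
  rw [hrfl3, link_symm₁ G C D A B, inter₄_perm₃ A B C D] at hu3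
  have hd2eq : diagEdges G B A D C = diagEdges G A B C D :=
    (diag_symm₃ G A B D C).trans (diag_symm₂ G A B C D)
  rw [hd2eq, Dga_opp G A B C D, link_symm₁ G C D B A, link_symm₁ G A B D C,
    inter₄_perm₂ A B C D] at hu2
  have hd4eq : diagEdges G B A C D = diagEdges G A B C D := diag_symm₃ G A B C D
  have hdbeq : Dga G A B D C
      = {e ∈ diagEdges G A B C D | ∃ x ∈ e, x ∈ (A \ B) ∩ (D \ C)} := by
    unfold Dga
    rw [diag_symm₂]
  rw [hd4eq, Dgb_opp G A B C D, ← hdbeq, link_symm₁ G A B C D,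
    inter₄_perm₄ A B C D] at hu4
  -- diagonal splitting
  have hdsplit : (diagEdges G A B C D).ncard
      = (Dga G A B C D).ncard + (Dga G A B D C).ncard := by
    rw [diag_eq_Dga_union G A B C D]
    exact Set.ncard_union_eq (Dga_disjoint G A B C D) (Set.toFinite _) (Set.toFinite _)
  -- budgets
  have hb1 := budget (G := G) (A := A) (B := B) hU2 hordAB
  have hb2 := budget (G := G) (A := C) (B := D) (C := A) (D := B) hU1 hordCD
  rw [inter₄_comm A B C D, diag_symm₁ G A B C D] at hb2
  -- link size decompositions
  have hl1 := ncard_link G C D A B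
  have hl2 := ncard_link G C D B A
  have hl3 := ncard_link G A B C D
  have hl4 := ncard_link G A B D C
  -- full budget equalities
  have hfb1 : ((A ∩ B) \ D).ncard + ((A ∩ B) \ C).ncard + (A ∩ B ∩ C ∩ D).ncard
      + (sepEdges G A B).ncard = 3 := by
    have h1 := sepOrder_eq_add G A B
    have h2 := ncard_inter_split hU2 A B
    omega
  have hfb2 : ((C ∩ D) \ B).ncard + ((C ∩ D) \ A).ncard + (A ∩ B ∩ C ∩ D).ncard
      + (sepEdges G C D).ncard = 3 := by
    have h1 := sepOrder_eq_add G C D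
    have h2 := ncard_inter_split hU1 C D
    rw [inter₄_comm A B C D] at h2
    omega
  have hdecAB := sep_decomp_ncard (G := G) (A := A) (B := B) (C := C) (D := D) hU1 hU2
  have hdecCD := sep_decomp_ncard (G := G) (A := C) (B := D) (C := A) (D := B) hU2 hU1
  rw [diag_symm₁ G A B C D] at hdecCD
  have hsubAB := sep_decomp_subset G A B C D
  have hsubCD := sep_decomp_subset G C D A B
  have hsubABn : (linkE G A B C D ∪ linkE G A B D C ∪ diagEdges G A B C D : Set (Sym2 V)).ncard
      ≤ (sepEdges G A B).ncard := Set.ncard_le_ncard hsubAB (Set.toFinite _)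
  have hsubCDn : (linkE G C D A B ∪ linkE G C D B A ∪ diagEdges G C D A B : Set (Sym2 V)).ncard
      ≤ (sepEdges G C D).ncard := Set.ncard_le_ncard hsubCD (Set.toFinite _)
  rw [diag_symm₁ G A B C D] at hsubCDn
  -- the main numerical conclusion
  have hkey : (diagEdges G A B C D).ncard = 0 ∧
      (((link G C D A B).ncard = 1 ∧ (link G C D B A).ncard = 1 ∧
        (link G A B C D).ncard = 1 ∧ (link G A B D C).ncard = 1 ∧
        (A ∩ B ∩ C ∩ D).ncard = 1) ∨
       ((link G C D A B).ncard = 0 ∧ (link G C D B A).ncard = 0 ∧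
        (link G A B C D).ncard = 0 ∧ (link G A B D C).ncard = 0 ∧
        (A ∩ B ∩ C ∩ D).ncard = 3)) := by
    omega
  have hdiagE : diagEdges G A B C D = ∅ :=
    (Set.ncard_eq_zero (Set.toFinite _)).mp hkey.1
  rw [diag_symm₁ G A B C D] at hsubCD
  rcases hkey.2 with hcase | hcase
  · -- case (1) : all links have size one, the centre is one vertex
    have hbundle : (link G C D A B).ncard = 1 ∧ (link G C D B A).ncard = 1 ∧
        (link G A B C D).ncard = 1 ∧ (link G A B D C).ncard = 1 ∧
        (A ∩ B ∩ C ∩ D).ncard = 1 ∧ diagEdges G A B C D = ∅ :=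
      ⟨hcase.1, hcase.2.1, hcase.2.2.1, hcase.2.2.2.1, hcase.2.2.2.2, hdiagE⟩
    have htAB : linkE G A B C D ∪ linkE G A B D C ∪ diagEdges G A B C D
        = sepEdges G A B :=
      Set.eq_of_subset_of_ncard_le hsubAB (by omega) (Set.toFinite _)
    have htCD : linkE G C D A B ∪ linkE G C D B A ∪ diagEdges G A B C D
        = sepEdges G C D :=
      Set.eq_of_subset_of_ncard_le hsubCD (by omega) (Set.toFinite _)
    have hjump : jumpEdges G A B C D = ∅ := by
      rw [Set.eq_empty_iff_forall_notMem]
      rintro e ⟨hedge, a, b, rfl, hcs⟩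
      rcases hcs with ⟨ha, hb⟩ | ⟨ha, hb⟩
      · have haC : a ∈ C \ D := ⟨(mem_or_of_union hU2 a).resolve_right ha.2, ha.2⟩
        have hbD : b ∈ D \ C := ⟨(mem_or_of_union hU2 b).resolve_left hb.2, hb.2⟩
        have hm : s(a, b) ∈ sepEdges G C D :=
          mem_sepEdges_of (G.mem_edgeSet.mp hedge) haC hbD
        rw [← htCD] at hm
        rcases hm with (h | h) | h
        · obtain ⟨-, -, w, hw, hwAB⟩ := h
          rcases Sym2.mem_iff.mp hw with rfl | rfl
          · exact hwAB.2 ha.1.2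
          · exact hwAB.2 hb.1.2
        · obtain ⟨-, -, w, hw, hwBA⟩ := h
          rcases Sym2.mem_iff.mp hw with rfl | rfl
          · exact hwBA.2 ha.1.1
          · exact hwBA.2 hb.1.1
        · rw [hdiagE] at h
          exact h
      · have haA : a ∈ A \ B := ⟨(mem_or_of_union hU1 a).resolve_right ha.2, ha.2⟩
        have hbB : b ∈ B \ A := ⟨(mem_or_of_union hU1 b).resolve_left hb.2, hb.2⟩
        have hm : s(a, b) ∈ sepEdges G A B :=
          mem_sepEdges_of (G.mem_edgeSet.mp hedge) haA hbB
        rw [← htAB] at hm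
        rcases hm with (h | h) | h
        · obtain ⟨-, -, w, hw, hwCD⟩ := h
          rcases Sym2.mem_iff.mp hw with rfl | rfl
          · exact hwCD.2 ha.1.2
          · exact hwCD.2 hb.1.2
        · obtain ⟨-, -, w, hw, hwDC⟩ := h
          rcases Sym2.mem_iff.mp hw with rfl | rfl
          · exact hwDC.2 ha.1.1
          · exact hwDC.2 hb.1.1
        · rw [hdiagE] at h
          exact h
    have hnotb2 : ¬(link G C D A B = ∅ ∧ link G C D B A = ∅ ∧
        link G A B C D = ∅ ∧ link G A B D C = ∅ ∧
        (A ∩ B ∩ C ∩ D).ncard = 3 ∧ diagEdges G A B C D = ∅) := by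
      rintro ⟨-, -, -, -, h5, -⟩
      omega
    exact ⟨Or.inl ⟨hbundle, hnotb2⟩, hjump, fun _ => hbundle⟩
  · -- case (2) : all links are empty, the centre has three vertices
    have hsepABe : sepEdges G A B = ∅ :=
      (Set.ncard_eq_zero (Set.toFinite _)).mp (by omega)
    have hsepCDe : sepEdges G C D = ∅ :=
      (Set.ncard_eq_zero (Set.toFinite _)).mp (by omega)
    have hPe : (A ∩ B) \ D = ∅ :=
      (Set.ncard_eq_zero (Set.toFinite _)).mp (by omega)
    have hQe : (A ∩ B) \ C = ∅ :=
      (Set.ncard_eq_zero (Set.toFinite _)).mp (by omega)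
    have hP'e : (C ∩ D) \ B = ∅ :=
      (Set.ncard_eq_zero (Set.toFinite _)).mp (by omega)
    have hQ'e : (C ∩ D) \ A = ∅ :=
      (Set.ncard_eq_zero (Set.toFinite _)).mp (by omega)
    have hbundle2 : link G C D A B = ∅ ∧ link G C D B A = ∅ ∧
        link G A B C D = ∅ ∧ link G A B D C = ∅ ∧
        (A ∩ B ∩ C ∩ D).ncard = 3 ∧ diagEdges G A B C D = ∅ :=
      ⟨(Set.ncard_eq_zero (Set.toFinite _)).mp hcase.1,
       (Set.ncard_eq_zero (Set.toFinite _)).mp hcase.2.1,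
       (Set.ncard_eq_zero (Set.toFinite _)).mp hcase.2.2.1,
       (Set.ncard_eq_zero (Set.toFinite _)).mp hcase.2.2.2.1,
       hcase.2.2.2.2, hdiagE⟩
    have hjump : jumpEdges G A B C D = ∅ := by
      rw [Set.eq_empty_iff_forall_notMem]
      rintro e ⟨hedge, a, b, rfl, hcs⟩
      rcases hcs with ⟨ha, hb⟩ | ⟨ha, hb⟩
      · have haC : a ∈ C \ D := ⟨(mem_or_of_union hU2 a).resolve_right ha.2, ha.2⟩
        have hbD : b ∈ D \ C := ⟨(mem_or_of_union hU2 b).resolve_left hb.2, hb.2⟩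
        have hm : s(a, b) ∈ sepEdges G C D :=
          mem_sepEdges_of (G.mem_edgeSet.mp hedge) haC hbD
        rw [hsepCDe] at hm
        exact hm
      · have haA : a ∈ A \ B := ⟨(mem_or_of_union hU1 a).resolve_right ha.2, ha.2⟩
        have hbB : b ∈ B \ A := ⟨(mem_or_of_union hU1 b).resolve_left hb.2, hb.2⟩
        have hm : s(a, b) ∈ sepEdges G A B :=
          mem_sepEdges_of (G.mem_edgeSet.mp hedge) haA hbB
        rw [hsepABe] at hm
        exact hm
    have hnotb1 : ¬((link G C D A B).ncard = 1 ∧ (link G C D B A).ncard = 1 ∧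
        (link G A B C D).ncard = 1 ∧ (link G A B D C).ncard = 1 ∧
        (A ∩ B ∩ C ∩ D).ncard = 1 ∧ diagEdges G A B C D = ∅) := by
      rintro ⟨-, -, -, -, h5, -⟩
      omega
    refine ⟨Or.inr ⟨hbundle2, hnotb1⟩, hjump, ?_⟩
    intro hconn
    exfalso
    have hI1ne : ((A \ B) ∩ (C \ D)).Nonempty := by
      have h2 : ¬(A ⊆ D ∧ C ⊆ B) := fun h => hcross (Or.inr (Or.inl h))
      rw [not_and_or] at h2
      rcases h2 with h2 | h2
      · rw [Set.not_subset] at h2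
        obtain ⟨a, haA, haD⟩ := h2
        have haC : a ∈ C := (mem_or_of_union hU2 a).resolve_right haD
        have haB : a ∉ B := by
          intro haB
          have h' : a ∈ (A ∩ B) \ D := ⟨⟨haA, haB⟩, haD⟩
          rw [hPe] at h'
          exact h'
        exact ⟨a, ⟨haA, haB⟩, haC, haD⟩
      · rw [Set.not_subset] at h2
        obtain ⟨c, hcC, hcB⟩ := h2
        have hcA : c ∈ A := (mem_or_of_union hU1 c).resolve_right hcB
        have hcD : c ∉ D := by
          intro hcD
          have h' : c ∈ (C ∩ D) \ B := ⟨⟨hcC, hcD⟩, hcB⟩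
          rw [hP'e] at h'
          exact h'
        exact ⟨c, ⟨hcA, hcB⟩, hcC, hcD⟩
    have hI2ne : ((A \ B) ∩ (D \ C)).Nonempty := by
      have h2 : ¬(A ⊆ C ∧ D ⊆ B) := fun h => hcross (Or.inl h)
      rw [not_and_or] at h2
      rcases h2 with h2 | h2
      · rw [Set.not_subset] at h2
        obtain ⟨a, haA, haC⟩ := h2
        have haD : a ∈ D := (mem_or_of_union hU2 a).resolve_left haC
        have haB : a ∉ B := by
          intro haB
          have h' : a ∈ (A ∩ B) \ C := ⟨⟨haA, haB⟩, haC⟩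
          rw [hQe] at h'
          exact h'
        exact ⟨a, ⟨haA, haB⟩, haD, haC⟩
      · rw [Set.not_subset] at h2
        obtain ⟨t, htD, htB⟩ := h2
        have htA : t ∈ A := (mem_or_of_union hU1 t).resolve_right htB
        have htC : t ∉ C := by
          intro htC
          have h' : t ∈ (C ∩ D) \ B := ⟨⟨htC, htD⟩, htB⟩
          rw [hP'e] at h'
          exact h'
        exact ⟨t, ⟨htA, htB⟩, htD, htC⟩
    have hI3ne : ((B \ A) ∩ (C \ D)).Nonempty := by
      have h2 : ¬(B ⊆ D ∧ C ⊆ A) := fun h => hcross (Or.inr (Or.inr (Or.inr h)))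
      rw [not_and_or] at h2
      rcases h2 with h2 | h2
      · rw [Set.not_subset] at h2
        obtain ⟨b, hbB, hbD⟩ := h2
        have hbC : b ∈ C := (mem_or_of_union hU2 b).resolve_right hbD
        have hbA : b ∉ A := by
          intro hbA
          have h' : b ∈ (A ∩ B) \ D := ⟨⟨hbA, hbB⟩, hbD⟩
          rw [hPe] at h'
          exact h'
        exact ⟨b, ⟨hbB, hbA⟩, hbC, hbD⟩
      · rw [Set.not_subset] at h2
        obtain ⟨c, hcC, hcA⟩ := h2
        have hcB : c ∈ B := (mem_or_of_union hU1 c).resolve_left hcA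
        have hcD : c ∉ D := by
          intro hcD
          have h' : c ∈ (C ∩ D) \ A := ⟨⟨hcC, hcD⟩, hcA⟩
          rw [hQ'e] at h'
          exact h'
        exact ⟨c, ⟨hcB, hcA⟩, hcC, hcD⟩
    have hI4ne : ((B \ A) ∩ (D \ C)).Nonempty := by
      have h2 : ¬(B ⊆ C ∧ D ⊆ A) := fun h => hcross (Or.inr (Or.inr (Or.inl h)))
      rw [not_and_or] at h2
      rcases h2 with h2 | h2
      · rw [Set.not_subset] at h2
        obtain ⟨b, hbB, hbC⟩ := h2
        have hbD : b ∈ D := (mem_or_of_union hU2 b).resolve_left hbC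
        have hbA : b ∉ A := by
          intro hbA
          have h' : b ∈ (A ∩ B) \ C := ⟨⟨hbA, hbB⟩, hbC⟩
          rw [hQe] at h'
          exact h'
        exact ⟨b, ⟨hbB, hbA⟩, hbD, hbC⟩
      · rw [Set.not_subset] at h2
        obtain ⟨t, htD, htA⟩ := h2
        have htB : t ∈ B := (mem_or_of_union hU1 t).resolve_left htA
        have htC : t ∉ C := by
          intro htC
          have h' : t ∈ (C ∩ D) \ A := ⟨⟨htC, htD⟩, htA⟩
          rw [hQ'e] at h'
          exact h'
        exact ⟨t, ⟨htB, htA⟩, htD, htC⟩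
    rcases hconn with hc | hc
    · obtain ⟨u1, hu1⟩ := hI1ne
      obtain ⟨u2, hu2⟩ := hI2ne
      obtain ⟨wlk⟩ := hc.preconnected ⟨u1, hu1.1⟩ ⟨u2, hu2.1⟩
      obtain ⟨x', y', hxS, hyS, hxR, hyR, hadj⟩ :=
        walk_cross (R := C \ D) wlk hu1.2 (fun h => hu2.2.2 h.1)
      have hyD : y' ∈ D \ C := by
        by_cases hyC : y' ∈ C
        · by_cases hyDm : y' ∈ D
          · exfalso
            have h' : y' ∈ (C ∩ D) \ B := ⟨⟨hyC, hyDm⟩, hyS.2⟩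
            rw [hP'e] at h'
            exact h'
          · exact absurd ⟨hyC, hyDm⟩ hyR
        · exact ⟨(mem_or_of_union hU2 y').resolve_left hyC, hyC⟩
      have hm : s(x', y') ∈ sepEdges G C D := mem_sepEdges_of hadj hxR hyD
      rw [hsepCDe] at hm
      exact hm
    · obtain ⟨u3, hu3⟩ := hI3ne
      obtain ⟨u4, hu4⟩ := hI4ne
      obtain ⟨wlk⟩ := hc.preconnected ⟨u3, hu3.1⟩ ⟨u4, hu4.1⟩
      obtain ⟨x', y', hxS, hyS, hxR, hyR, hadj⟩ :=
        walk_cross (R := C \ D) wlk hu3.2 (fun h => hu4.2.2 h.1)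
      have hyD : y' ∈ D \ C := by
        by_cases hyC : y' ∈ C
        · by_cases hyDm : y' ∈ D
          · exfalso
            have h' : y' ∈ (C ∩ D) \ A := ⟨⟨hyC, hyDm⟩, hyS.2⟩
            rw [hQ'e] at h'
            exact h'
          · exact absurd ⟨hyC, hyDm⟩ hyR
        · exact ⟨(mem_or_of_union hU2 y').resolve_left hyC, hyC⟩
      have hm : s(x', y') ∈ sepEdges G C D := mem_sepEdges_of hadj hxR hyD
      rw [hsepCDe] at hm
      exact hm

end Final
end Paper
end

section
/- Let (A,B) and (C,D) be crossing mixed 3-separations of a graph G such that G[A\B] or G[B\A] is connected. Then the centre of the crossing diagram cannot have size three. -/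
namespace Paper

open SimpleGraph

variable {V : Type*} [Fintype V] [DecidableEq V]

/-- If `G[S]` is connected and `S` is covered by `S1, S2` which are disjoint on `S`
and have no edges between them inside `S`, then `S` lies in one of them. -/
lemma induce_connected_cases (G : SimpleGraph V) {S S1 S2 : Set V}
    (hconn : (G.induce S).Connected)
    (hU : ∀ x ∈ S, x ∈ S1 ∨ x ∈ S2)
    (hdisj : ∀ x ∈ S, x ∈ S1 → x ∉ S2)
    (hadj : ∀ x y, x ∈ S → y ∈ S → x ∈ S1 → y ∈ S2 → ¬ G.Adj x y) :
    (∀ x ∈ S, x ∈ S1) ∨ (∀ x ∈ S, x ∈ S2) := by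
  have key : ∀ (u v : S) (_ : (G.induce S).Walk u v), (u : V) ∈ S1 → (v : V) ∈ S1 := by
    intro u v p
    induction p with
    | nil => exact id
    | @cons u w v hadj' p ih =>
      intro hu
      apply ih
      rcases hU (w : V) w.2 with h | h
      · exact h
      · exact absurd (hadj' : G.Adj u w) (hadj u w u.2 w.2 hu h)
  by_contra hcon
  push_neg at hcon
  obtain ⟨⟨a, haS, haS1⟩, ⟨b, hbS, hbS2⟩⟩ := hcon
  have hbS1 : b ∈ S1 := (hU b hbS).resolve_right hbS2
  have haS2 : a ∈ S2 := (hU a haS).resolve_left haS1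
  obtain ⟨p⟩ := hconn.preconnected ⟨b, hbS⟩ ⟨a, haS⟩
  exact hdisj a haS (key ⟨b, hbS⟩ ⟨a, haS⟩ p hbS1) haS2

/-- Core lemma: with centre-equality facts and `G[A\B]` connected, get nestedness. -/
lemma core_lemma (G : SimpleGraph V) (A B C D : Set V)
    (hUAB : A ∪ B = Set.univ) (hUCD : C ∪ D = Set.univ)
    (hsub : ∀ x, x ∈ C ∩ D → x ∈ A ∩ B)
    (hABsub : ∀ x, x ∈ A ∩ B → x ∈ C ∩ D)
    (hdiag : sepEdges G C D ⊆ diagEdges G A B C D)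
    (hconn : (G.induce (A \ B)).Connected) :
    (A ⊆ C ∧ D ⊆ B) ∨ (A ⊆ D ∧ C ⊆ B) := by
  have h1 : ∀ x ∈ A \ B, x ∈ C \ D ∨ x ∈ D \ C := by
    intro x hx
    have hxCD : x ∈ C ∪ D := hUCD ▸ Set.mem_univ x
    rcases hxCD with hC | hD
    · by_cases hD : x ∈ D
      · exact absurd (hsub x ⟨hC, hD⟩).2 hx.2
      · exact Or.inl ⟨hC, hD⟩
    · by_cases hC : x ∈ C
      · exact absurd (hsub x ⟨hC, hD⟩).2 hx.2
      · exact Or.inr ⟨hD, hC⟩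
  have hnoadj : ∀ x y, x ∈ A \ B → y ∈ A \ B → x ∈ C \ D → y ∈ D \ C → ¬ G.Adj x y := by
    intro x y hxAB hyAB hxC hyD hadj
    have he : s(x, y) ∈ sepEdges G C D := ⟨hadj, x, hxC, y, hyD, rfl⟩
    obtain ⟨-, x', y', hxy, hpat⟩ := hdiag he
    have hxy' : (x = x' ∧ y = y') ∨ (x = y' ∧ y = x') := by
      rw [Sym2.eq_iff] at hxy; tauto
    rcases hpat with ⟨hx', hy'⟩ | ⟨hx', hy'⟩ <;> rcases hxy' with ⟨h1', h2'⟩ | ⟨h1', h2'⟩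
    · exact hyAB.2 (h2' ▸ hy'.1.1)
    · exact hxAB.2 (h1' ▸ hy'.1.1)
    · exact hyAB.2 (h2' ▸ hy'.1.1)
    · exact hxAB.2 (h1' ▸ hy'.1.1)
  have := induce_connected_cases G hconn h1
    (fun x _ hx1 hx2 => hx2.2 hx1.1)
    hnoadj
  rcases this with h | h
  · left
    constructor
    · intro x hx
      by_cases hB : x ∈ B
      · exact (hABsub x ⟨hx, hB⟩).1
      · exact (h x ⟨hx, hB⟩).1
    · intro x hxD
      by_contra hB
      have hxA : x ∈ A := by
        have := hUAB ▸ Set.mem_univ x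
        rcases this with h' | h'
        · exact h'
        · exact absurd h' hB
      exact (h x ⟨hxA, hB⟩).2 hxD
  · right
    constructor
    · intro x hx
      by_cases hB : x ∈ B
      · exact (hABsub x ⟨hx, hB⟩).2
      · exact (h x ⟨hx, hB⟩).1
    · intro x hxC
      by_contra hB
      have hxA : x ∈ A := by
        have := hUAB ▸ Set.mem_univ x
        rcases this with h' | h'
        · exact h'
        · exact absurd h' hB
      exact (h x ⟨hxA, hB⟩).2 hxC

lemma diag_swap (G : SimpleGraph V) (A B C D : Set V) :
    diagEdges G A B C D ⊆ diagEdges G B A C D := by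
  rintro e ⟨he, x, y, hxy, hpat⟩
  refine ⟨he, y, x, by rw [hxy, Sym2.eq_swap], ?_⟩
  tauto

/-- If two mixed 3-separations cross and `(A,B)` is half-connected,
then the centre cannot have size three. -/
theorem stmt8 (G : SimpleGraph V) (A B C D : Set V)
    (hAB : MixedKSep G 3 A B) (hCD : MixedKSep G 3 C D)
    (hcross : ¬ Nested A B C D)
    (hhalf : (G.induce (A \ B)).Connected ∨ (G.induce (B \ A)).Connected) :
    (centre G A B C D).ncard ≠ 3 := by
  intro h3
  -- centre is contained in both separators
  have hsubAB : centre G A B C D ⊆ sepSet G A B := by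
    rintro z (⟨v, hv, rfl⟩ | ⟨e, ⟨he, x, y, hxy, hpat⟩, rfl⟩)
    · exact Or.inl ⟨v, ⟨hv.1.1.1, hv.1.1.2⟩, rfl⟩
    · refine Or.inr ⟨e, ⟨he, ?_⟩, rfl⟩
      rcases hpat with ⟨hx, hy⟩ | ⟨hx, hy⟩
      · exact ⟨x, hx.1, y, hy.1, hxy⟩
      · exact ⟨x, hx.1, y, hy.1, hxy⟩
  have hsubCD : centre G A B C D ⊆ sepSet G C D := by
    rintro z (⟨v, hv, rfl⟩ | ⟨e, ⟨he, x, y, hxy, hpat⟩, rfl⟩)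
    · exact Or.inl ⟨v, ⟨hv.1.2, hv.2⟩, rfl⟩
    · refine Or.inr ⟨e, ⟨he, ?_⟩, rfl⟩
      rcases hpat with ⟨hx, hy⟩ | ⟨hx, hy⟩
      · exact ⟨x, hx.2, y, hy.2, hxy⟩
      · exact ⟨y, hy.2, x, hx.2, by rw [hxy, Sym2.eq_swap]⟩
  have hfinAB : (sepSet G A B).Finite := Set.toFinite _
  have hfinCD : (sepSet G C D).Finite := Set.toFinite _
  have heqAB : centre G A B C D = sepSet G A B :=
    Set.eq_of_subset_of_ncard_le hsubAB (by rw [h3]; exact hAB.2.le) hfinAB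
  have heqCD : centre G A B C D = sepSet G C D :=
    Set.eq_of_subset_of_ncard_le hsubCD (by rw [h3]; exact hCD.2.le) hfinCD
  -- vertex facts
  have hABsub : ∀ x, x ∈ A ∩ B → x ∈ C ∩ D := by
    intro v hv
    have : (Sum.inl v : V ⊕ Sym2 V) ∈ centre G A B C D := by
      rw [heqAB]; exact Or.inl ⟨v, hv, rfl⟩
    rcases this with ⟨w, hw, hww⟩ | ⟨e, _, hee⟩
    · obtain rfl := Sum.inl_injective hww
      exact ⟨hw.1.2, hw.2⟩
    · exact absurd hee (by simp)
  have hsub : ∀ x, x ∈ C ∩ D → x ∈ A ∩ B := by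
    intro v hv
    have : (Sum.inl v : V ⊕ Sym2 V) ∈ centre G A B C D := by
      rw [heqCD]; exact Or.inl ⟨v, hv, rfl⟩
    rcases this with ⟨w, hw, hww⟩ | ⟨e, _, hee⟩
    · exact (Sum.inl_injective hww ▸ hw).1.1
    · exact absurd hee (by simp)
  -- edge fact
  have hdiag : sepEdges G C D ⊆ diagEdges G A B C D := by
    intro e he
    have : (Sum.inr e : V ⊕ Sym2 V) ∈ centre G A B C D := by
      rw [heqCD]; exact Or.inr ⟨e, he, rfl⟩
    rcases this with ⟨v, _, hvv⟩ | ⟨e', he', hee⟩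
    · exact absurd hvv (by simp)
    · exact Sum.inr_injective hee ▸ he'
  apply hcross
  have hUAB := hAB.1.1
  have hUCD := hCD.1.1
  rcases hhalf with hc | hc
  · rcases core_lemma G A B C D hUAB hUCD hsub hABsub hdiag hc with h | h
    · exact Or.inl h
    · exact Or.inr (Or.inl h)
  · have hUBA : B ∪ A = Set.univ := by rw [Set.union_comm]; exact hUAB
    have hsub' : ∀ x, x ∈ C ∩ D → x ∈ B ∩ A := fun x hx => ⟨(hsub x hx).2, (hsub x hx).1⟩
    have hABsub' : ∀ x, x ∈ B ∩ A → x ∈ C ∩ D := fun x hx => hABsub x ⟨hx.2, hx.1⟩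
    have hdiag' : sepEdges G C D ⊆ diagEdges G B A C D :=
      fun e he => diag_swap G A B C D (hdiag he)
    rcases core_lemma G B A C D hUBA hUCD hsub' hABsub' hdiag' hc with h | h
    · exact Or.inr (Or.inr (Or.inl h))
    · exact Or.inr (Or.inr (Or.inr h))

end Paper
end

section
/- Let G be a 3-connected graph. If a mixed 3-separation (A,B) of G is not strong (i.e. some vertex in A∩B has degree exactly three in G), then (A,B) is crossed by a trivial tri-separation of G, namely the tri-separation ({v}, V(G)\{v}) for a degree-3 vertex v in A∩B. -/
namespace Paper

open SimpleGraph

variable {V : Type*} [Fintype V] [DecidableEq V]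

/-- A mixed 3-separation of a 3-connected graph that is not strong
is crossed by the trivial tri-separation at a degree-3 vertex of its separator. -/
theorem stmt9 (G : SimpleGraph V) (h3 : KConnected 3 G) (A B : Set V)
    (hAB : MixedKSep G 3 A B) (v : V) (hv : v ∈ A ∩ B)
    (hdeg : (G.neighborSet v).ncard = 3) :
    TriSep G {v} {v}ᶜ ∧ TrivialSep G {v} {v}ᶜ ∧
      ¬ Nested ({v} : Set V) {v}ᶜ A B := by
  obtain ⟨⟨hunion, hA, hB⟩, hord⟩ := hAB
  have hvA : v ∈ A := hv.1
  have hvB : v ∈ B := hv.2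
  have hcard : 1 < Fintype.card V := by
    have := h3.1; simp [Nat.card_eq_fintype_card] at this; omega
  obtain ⟨w, hw⟩ := Fintype.exists_ne_of_one_lt_card hcard v
  have hsepE : sepEdges G {v} {v}ᶜ = (fun y => s(v, y)) '' G.neighborSet v := by
    ext e
    constructor
    · rintro ⟨he, x, hx, y, hy, rfl⟩
      have hxv : x = v := hx.1
      subst hxv
      exact ⟨y, by simpa using he, rfl⟩
    · rintro ⟨y, hy, rfl⟩
      refine ⟨hy, v, by simp, y, ⟨?_, ?_⟩, rfl⟩ <;>
        simp [(G.ne_of_adj hy).symm]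
  have hinj : Set.InjOn (fun y => s(v, y)) (G.neighborSet v) :=
    fun a _ b _ h => Sym2.congr_right.mp h
  have hsep : sepSet G {v} {v}ᶜ = Sum.inr '' sepEdges G {v} {v}ᶜ := by
    simp [sepSet]
  have hord3 : sepOrder G {v} {v}ᶜ = 3 := by
    rw [sepOrder, hsep, Set.ncard_image_of_injective _ Sum.inr_injective, hsepE,
      Set.ncard_image_of_injOn hinj, hdeg]
  refine ⟨⟨⟨⟨by simp, by simp, ⟨w, by simp [hw]⟩⟩, hord3⟩, by simp⟩,
    ⟨v, hdeg, Or.inl ⟨rfl, rfl⟩⟩, ?_⟩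
  rintro (⟨h1, h2⟩ | ⟨h1, h2⟩ | ⟨h1, h2⟩ | ⟨h1, h2⟩)
  · exact (h2 hvB) rfl
  · exact (h2 hvA) rfl
  · obtain ⟨x, hxB, hxA⟩ := hB
    have : x = v := h2 hxB
    exact hxA (this ▸ hvA)
  · obtain ⟨x, hxA, hxB⟩ := hA
    have : x = v := h2 hxA
    exact hxB (this ▸ hvB)

end Paper
end
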